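/- arXiv:0803.1115 — 2 statements merged into one kernel-verified Lean document; each statement's English description precedes it below -/
import Mathlib

section
/- Let Γ be a connected spherical Coxeter matrix of small type, i.e. of type A_n (n ≥ 1), D_n (n ≥ 4), or E_n (n ∈ {6,7,8}), and let (f_i)_{i∈I} and (f'_i)_{i∈I} be two distinct LK-families, with associated LK-representations ψ, ψ' : B⁺ → End(V). Then ψ and ψ' are non-equivalent: there is no 𝔯-linear automorphism ν of V with ψ'_b = ν∘ψ_b∘ν⁻¹ for all b ∈ B⁺. -/
set_option maxRecDepth 4000

namespace LK

/-! ### Coxeter matrices -/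

/-- A Coxeter matrix on an index set `I` (entry `0` encodes `∞`). -/
structure CoxM (I : Type) where
  m : I → I → ℕ
  symm : ∀ i j, m i j = m j i
  one_iff : ∀ i j, m i j = 1 ↔ i = j

variable {I : Type}

/-- A Coxeter matrix is of small type if all its entries belong to `{1,2,3}`. -/
def CoxM.Small (M : CoxM I) : Prop := ∀ i j, M.m i j = 1 ∨ M.m i j = 2 ∨ M.m i j = 3

/-- The alternating word `i j i j ⋯` with `k` letters. -/
def braidList (k : ℕ) (i j : I) : List I :=
  (List.range k).map (fun n => if n % 2 = 0 then i else j)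

/-- The braid word `s_i s_j s_i ⋯` (`k` letters) in the free monoid. -/
def braidWord (k : ℕ) (i j : I) : FreeMonoid I := FreeMonoid.ofList (braidList k i j)

/-- The braid relations defining the Artin–Tits monoid. -/
def artinRel (M : CoxM I) : FreeMonoid I → FreeMonoid I → Prop :=
  fun x y => ∃ i j, M.m i j ≠ 0 ∧ x = braidWord (M.m i j) i j ∧ y = braidWord (M.m i j) j i

/-- The congruence on the free monoid generated by the braid relations. -/
def artinCon (M : CoxM I) : Con (FreeMonoid I) := conGen (artinRel M)

/-- The Artin–Tits monoid `B⁺` of a Coxeter matrix. -/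
def AM (M : CoxM I) := (artinCon M).Quotient

instance (M : CoxM I) : Monoid (AM M) := inferInstanceAs (Monoid (artinCon M).Quotient)

/-- The standard generators of the Artin–Tits monoid. -/
def gen (M : CoxM I) (i : I) : AM M := (artinCon M).mk' (FreeMonoid.of i)

/-- `I(b) = {i ∈ I ∣ s_i ≼ b}`, where `≼` is left divisibility. -/
def IdxSet (M : CoxM I) (x : AM M) : Set I := {i | gen M i ∣ x}

/-- The braid word `s_i s_j s_i ⋯` (`k` letters) in the free group. -/
def braidWordG (k : ℕ) (i j : I) : FreeGroup I := ((braidList k i j).map FreeGroup.of).prod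

/-- The braid relators defining the Artin–Tits group. -/
def artinGRels (M : CoxM I) : Set (FreeGroup I) :=
  {r | ∃ i j, M.m i j ≠ 0 ∧ r = braidWordG (M.m i j) i j * (braidWordG (M.m i j) j i)⁻¹}

/-- The Artin–Tits group `B` of a Coxeter matrix. -/
def AG (M : CoxM I) := PresentedGroup (artinGRels M)

instance (M : CoxM I) : Group (AG M) := inferInstanceAs (Group (PresentedGroup _))

/-- The standard generators of the Artin–Tits group. -/
def ggen (M : CoxM I) (i : I) : AG M := PresentedGroup.of i

/-- The relators defining the Coxeter group. -/
def coxRels (M : CoxM I) : Set (FreeGroup I) :=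
  {r | ∃ i j, M.m i j ≠ 0 ∧ r = (FreeGroup.of i * FreeGroup.of j) ^ (M.m i j)}

/-- The Coxeter group `W` of a Coxeter matrix. -/
def CoxG (M : CoxM I) := PresentedGroup (coxRels M)

instance (M : CoxM I) : Group (CoxG M) := inferInstanceAs (Group (PresentedGroup _))

/-- A Coxeter matrix is spherical if its Coxeter group is finite. -/
def Spherical (M : CoxM I) : Prop := Finite (CoxG M)

/-- Connectedness of the Coxeter graph: there is an edge between `i` and `j`
iff `m i j ∉ {1,2}`. -/
def Connected (M : CoxM I) : Prop :=
  ∀ i j : I, Relation.ReflTransGen (fun a b => M.m a b ≠ 1 ∧ M.m a b ≠ 2) i j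

/-- Restriction of a Coxeter matrix to a subset of the index set. -/
def CoxM.restrictF [DecidableEq I] (M : CoxM I) (J : Finset I) : CoxM {i // i ∈ J} :=
  ⟨fun i j => M.m i j, fun i j => M.symm i j,
   fun i j => (M.one_iff i j).trans (by exact Subtype.coe_inj)⟩

/-- An irreducible affine Coxeter matrix: connected, non-spherical, but every proper
parabolic submatrix is spherical. -/
def Affine [Fintype I] [DecidableEq I] (M : CoxM I) : Prop :=
  Connected M ∧ ¬ Spherical M ∧ ∀ J : Finset I, J ≠ Finset.univ → Spherical (M.restrictF J)

/-! ### The standard root system -/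

section Roots

variable [Fintype I] [DecidableEq I]

/-- The coefficients `-2 cos (π / m i j)` of the standard bilinear form. -/
noncomputable def cf (M : CoxM I) (i j : I) : ℝ := -2 * Real.cos (Real.pi / (M.m i j : ℝ))

/-- The standard symmetric bilinear form `( · | · )` on `E = ⊕ ℝ α_i`. -/
noncomputable def bform (M : CoxM I) (x y : I → ℝ) : ℝ := ∑ i, ∑ j, x i * y j * cf M i j

/-- The simple root `α_i`. -/
def sroot (i : I) : I → ℝ := Pi.single i 1

/-- The simple reflection `s_i` acting on `E`. -/
noncomputable def srefl (M : CoxM I) (i : I) (v : I → ℝ) : I → ℝ :=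
  v - bform M v (sroot i) • sroot i

/-- The roots: the orbit of the simple roots under the reflections. -/
inductive IsRoot (M : CoxM I) : (I → ℝ) → Prop
  | simple (i : I) : IsRoot M (sroot i)
  | srefl (i : I) (v : I → ℝ) : IsRoot M v → IsRoot M (LK.srefl M i v)

/-- The positive roots: roots with nonnegative coordinates. -/
def IsPos (M : CoxM I) (v : I → ℝ) : Prop := IsRoot M v ∧ ∀ i, 0 ≤ v i

/-- The set `Φ⁺` of positive roots, as a type. -/
def Pos (M : CoxM I) := {v : I → ℝ // IsPos M v}

/-- The depth of a positive root: the least number of simple reflections needed to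
send it to a negative vector. -/
noncomputable def dep (M : CoxM I) (v : I → ℝ) : ℕ :=
  sInf {n | ∃ l : List I, l.length = n ∧ ∃ k, l.foldr (srefl M) v k < 0}

theorem isPos_sroot (M : CoxM I) (i : I) : IsPos M (sroot i) :=
  ⟨IsRoot.simple i, fun j => by rw [sroot, Pi.single_apply]; split <;> norm_num⟩

/-- The simple root `α_i` as a positive root. -/
def simplePos (M : CoxM I) (i : I) : Pos M := ⟨sroot i, isPos_sroot M i⟩

/-! ### The Lawrence–Krammer representation -/

variable (M : CoxM I) (R : Type) [CommRing R]

/-- The free module `V` with basis `(e_α)` indexed by the positive roots. -/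
abbrev VV := Pos M →₀ R

/-- The basis vector `e_α` of `V`. -/
noncomputable def ev (α : Pos M) : VV M R := Finsupp.single α 1

open scoped Classical in
/-- The value of the map `φ_i` on the basis vector indexed by `α`. -/
noncomputable def phiAux (a b c d : R) (i : I) (α : Pos M) : VV M R :=
  if α.1 = sroot i then 0
  else if srefl M i α.1 = α.1 then d • ev M R α
  else if h : IsPos M (srefl M i α.1) then
    if dep M α.1 < dep M (srefl M i α.1) then
      a • ev M R α + c • ev M R ⟨srefl M i α.1, h⟩
    else b • ev M R ⟨srefl M i α.1, h⟩
  else 0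

/-- The linear map `φ_i : V → V`. -/
noncomputable def phi (a b c d : R) (i : I) : VV M R →ₗ[R] VV M R :=
  Finsupp.lift (VV M R) R (Pos M) (phiAux M R a b c d i)

/-- The linear map `ψ_i = φ_i + f_i ⊠ e_{α_i}`. -/
noncomputable def psim (a b c d : R) (f : I → (VV M R →ₗ[R] R)) (i : I) :
    VV M R →ₗ[R] VV M R :=
  phi M R a b c d i + (f i).smulRight (ev M R (simplePos M i))

/-- LK-families. -/
structure IsLK (a b c d : R) (f : I → (VV M R →ₗ[R] R)) : Prop where
  diag : ∀ i j, i ≠ j → f i (ev M R (simplePos M j)) = 0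
  rel2 : ∀ i j, M.m i j = 2 → (f i).comp (phi M R a b c d j) = d • f i
  rel3 : ∀ i j, M.m i j = 3 →
    (f i).comp (phi M R a b c d j) = (f j).comp (phi M R a b c d i)

/-- The `R`-module `𝓕` of LK-families. -/
noncomputable def LKFamilies (a b c d : R) : Submodule R (I → (VV M R →ₗ[R] R)) where
  carrier := {f | IsLK M R a b c d f}
  add_mem' := by
    rintro f g ⟨hf1, hf2, hf3⟩ ⟨hg1, hg2, hg3⟩
    refine ⟨fun i j hij => ?_, fun i j hij => ?_, fun i j hij => ?_⟩
    · rw [Pi.add_apply, LinearMap.add_apply, hf1 i j hij, hg1 i j hij, add_zero]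
    · simp only [Pi.add_apply, LinearMap.add_comp, hf2 i j hij, hg2 i j hij, smul_add]
    · simp only [Pi.add_apply, LinearMap.add_comp, hf3 i j hij, hg3 i j hij]
  zero_mem' := by
    refine ⟨fun i j hij => ?_, fun i j hij => ?_, fun i j hij => ?_⟩
    · rw [Pi.zero_apply, LinearMap.zero_apply]
    · simp only [Pi.zero_apply, LinearMap.zero_comp, smul_zero]
    · simp only [Pi.zero_apply, LinearMap.zero_comp]
  smul_mem' := by
    rintro r f ⟨h1, h2, h3⟩
    refine ⟨fun i j hij => ?_, fun i j hij => ?_, fun i j hij => ?_⟩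
    · rw [Pi.smul_apply, LinearMap.smul_apply, h1 i j hij, smul_zero]
    · rw [Pi.smul_apply, LinearMap.smul_comp, h2 i j hij]; exact smul_comm r d (f i)
    · simp only [Pi.smul_apply, LinearMap.smul_comp, h3 i j hij]

end Roots

/-! ### The monoid of binary relations -/

/-- The monoid of binary relations on a set `Ω`, where `β (R * S) α ↔ ∃ γ, β R γ ∧ γ S α`. -/
def Bin (Ω : Type) := Ω → Ω → Prop

instance (Ω : Type) : Monoid (Bin Ω) where
  mul T S := fun x z => ∃ y, T x y ∧ S y z
  one := fun x y => x = y
  mul_assoc T S U := by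
    funext x z
    apply propext
    constructor
    · rintro ⟨y, ⟨u, hTu, hSu⟩, hU⟩; exact ⟨u, hTu, y, hSu, hU⟩
    · rintro ⟨u, hT, y, hS, hU⟩; exact ⟨y, ⟨u, hT, hS⟩, hU⟩
  one_mul T := by
    funext x z
    apply propext
    constructor
    · rintro ⟨y, rfl, h⟩; exact h
    · intro h; exact ⟨x, rfl, h⟩
  mul_one T := by
    funext x z
    apply propext
    constructor
    · rintro ⟨y, h, rfl⟩; exact h
    · intro h; exact ⟨z, h, rfl⟩

/-- `R(Ψ) = {β ∈ Ω ∣ ∃ α ∈ Ψ, β R α}`. -/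
def Bin.image {Ω : Type} (T : Bin Ω) (Ψ : Set Ω) : Set Ω := {x | ∃ y ∈ Ψ, T x y}

/-! ### Further constructions -/

section More

variable [Fintype I] [DecidableEq I]

/-- The map `μ : 𝓕 → 𝔯` in the spherical case. -/
noncomputable def muSph (M : CoxM I) (R : Type) [CommRing R] (a b c d : R) (i0 : I) :
    LKFamilies M R a b c d →ₗ[R] R where
  toFun f := f.1 i0 (ev M R (simplePos M i0))
  map_add' f g := rfl
  map_smul' r f := rfl

/-- A graph automorphism of a Coxeter matrix. -/
def IsAut (M : CoxM I) (g : Equiv.Perm I) : Prop := ∀ i j, M.m (g i) (g j) = M.m i j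

/-- The action of a permutation of `I` on `E = ⊕ ℝ α_i`, sending `α_i` to `α_{g(i)}`. -/
def permE (g : Equiv.Perm I) (v : I → ℝ) : I → ℝ := fun i => v (g.symm i)

open scoped Classical in
/-- The element of `Φ⁺` with given coordinates (junk value if the vector is not
a positive root). -/
noncomputable def posOf (M : CoxM I) [Nonempty I] (v : I → ℝ) : Pos M :=
  if h : IsPos M v then ⟨v, h⟩ else simplePos M (Classical.arbitrary I)

/-- The action of a permutation of `I` on `Φ⁺`. -/
noncomputable def permPos (M : CoxM I) [Nonempty I] (g : Equiv.Perm I) (α : Pos M) : Pos M :=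
  posOf M (permE g α.1)

/-- The action of a permutation of `I` on `V`, permuting the basis `(e_α)`. -/
noncomputable def permV (M : CoxM I) (R : Type) [CommRing R] [Nonempty I] (g : Equiv.Perm I) :
    VV M R →ₗ[R] VV M R :=
  Finsupp.lmapDomain R R (permPos M g)

/-- The submodule `V^G` of fixed points of `V` under a group `G` of permutations of `I`. -/
noncomputable def fixedV (M : CoxM I) (R : Type) [CommRing R] [Nonempty I]
    (G : Subgroup (Equiv.Perm I)) : Submodule R (VV M R) where
  carrier := {v | ∀ g ∈ G, permV M R g v = v}
  add_mem' hx hy g hg := by rw [map_add, hx g hg, hy g hg]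
  zero_mem' g hg := map_zero _
  smul_mem' r v hv g hg := by rw [map_smul, hv g hg]

/-- The submonoid `(B⁺)^G` of fixed points of the Artin–Tits monoid under a group `G`
of permutations of `I` (acting via `actB`). -/
def fixedB (M : CoxM I) (actB : Equiv.Perm I → (AM M →* AM M))
    (G : Subgroup (Equiv.Perm I)) : Submonoid (AM M) where
  carrier := {x | ∀ g ∈ G, actB g x = x}
  one_mem' g hg := map_one _
  mul_mem' hx hy g hg := by rw [map_mul, hx g hg, hy g hg]

/-- The map `μ : 𝓕 → 𝔯^ℕ` in the affine case, defined from the data of the imaginary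
root `δ` and of a pair `(i0, j0)` with `m i0 j0 = 3`. -/
noncomputable def muAff (M : CoxM I) (R : Type) [CommRing R] [Nonempty I] (b c d : R)
    (δ : I → ℝ) (i0 j0 : I) (f : I → (VV M R →ₗ[R] R)) : ℕ → R := fun n =>
  if n % 2 = 0 then f i0 (ev M R (posOf M ((n / 2 : ℕ) • δ + sroot i0)))
  else
    c * d * f i0 (ev M R (posOf M (((n + 1) / 2 : ℕ) • δ - sroot i0)))
      - b * c * f i0 (ev M R (posOf M (((n + 1) / 2 : ℕ) • δ - sroot i0 - sroot j0)))
      - d * d * f j0 (ev M R (posOf M (((n + 1) / 2 : ℕ) • δ - sroot i0 - sroot j0)))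

end More

end LK

set_option linter.unusedSectionVars false
set_option linter.unusedVariables false
namespace LK
section Aux

variable {I : Type} [Fintype I] [DecidableEq I] (M : CoxM I)

lemma m_self (i : I) : M.m i i = 1 := (M.one_iff i i).mpr rfl

lemma cf_self (i : I) : cf M i i = 2 := by
  rw [cf, m_self]; norm_num

lemma cf_two {i j : I} (h : M.m i j = 2) : cf M i j = 0 := by
  rw [cf, h]; norm_num

lemma cf_three {i j : I} (h : M.m i j = 3) : cf M i j = -1 := by
  rw [cf, h]
  norm_num [Real.cos_pi_div_three]

lemma cf_comm (i j : I) : cf M i j = cf M j i := by rw [cf, cf, M.symm]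

lemma ne_of_m_ne_one {i j : I} (h : M.m i j ≠ 1) : i ≠ j :=
  fun he => h ((M.one_iff i j).mpr he)

lemma m_cases (hs : M.Small) {i j : I} (h : i ≠ j) : M.m i j = 2 ∨ M.m i j = 3 := by
  rcases hs i j with h1 | h2 | h3
  · exact absurd ((M.one_iff i j).mp h1) h
  · exact Or.inl h2
  · exact Or.inr h3

lemma cf_nonpos (hs : M.Small) {i j : I} (h : i ≠ j) : cf M i j ≤ 0 := by
  rcases m_cases M hs h with h2 | h3
  · rw [cf_two M h2]
  · rw [cf_three M h3]; norm_num

/- ### bform basics -/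

lemma bform_add_left (x y z : I → ℝ) : bform M (x + y) z = bform M x z + bform M y z := by
  simp only [bform, Pi.add_apply, add_mul, Finset.sum_add_distrib]

lemma bform_smul_left (r : ℝ) (x z : I → ℝ) : bform M (r • x) z = r * bform M x z := by
  simp only [bform, Pi.smul_apply, smul_eq_mul, Finset.mul_sum, mul_assoc]

lemma bform_neg_left (x z : I → ℝ) : bform M (-x) z = -bform M x z := by
  simp only [bform, Pi.neg_apply, neg_mul, Finset.sum_neg_distrib]

lemma bform_sub_smul_left (x y z : I → ℝ) (r : ℝ) :
    bform M (x - r • y) z = bform M x z - r * bform M y z := by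
  rw [sub_eq_add_neg, ← neg_smul, bform_add_left, bform_smul_left, neg_mul, sub_eq_add_neg]

lemma bform_comm (x y : I → ℝ) : bform M x y = bform M y x := by
  rw [bform, bform, Finset.sum_comm]
  apply Finset.sum_congr rfl; intro i _
  apply Finset.sum_congr rfl; intro j _
  rw [cf_comm]; ring

lemma bform_add_right (x y z : I → ℝ) : bform M z (x + y) = bform M z x + bform M z y := by
  rw [bform_comm M z, bform_add_left, bform_comm M x z, bform_comm M y z]

lemma bform_smul_right (r : ℝ) (x z : I → ℝ) : bform M z (r • x) = r * bform M z x := by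
  rw [bform_comm, bform_smul_left, bform_comm]

lemma bform_sub_smul_right (x y z : I → ℝ) (r : ℝ) :
    bform M z (x - r • y) = bform M z x - r * bform M z y := by
  rw [bform_comm M z, bform_sub_smul_left, bform_comm M x z, bform_comm M y z]

lemma bform_zero_left (z : I → ℝ) : bform M 0 z = 0 := by
  simp [bform]

lemma bform_sroot_right (v : I → ℝ) (k : I) :
    bform M v (sroot k) = ∑ l, v l * cf M l k := by
  rw [bform]
  apply Finset.sum_congr rfl; intro i _
  rw [Finset.sum_eq_single k]
  · simp [sroot]
  · intro j _ hj; simp [sroot, Pi.single_apply, hj]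
  · intro h; exact absurd (Finset.mem_univ k) h

lemma bform_sroot_sroot (i j : I) : bform M (sroot i) (sroot j) = cf M i j := by
  rw [bform_sroot_right, Finset.sum_eq_single i]
  · simp [sroot]
  · intro l _ hl; simp [sroot, Pi.single_apply, hl]
  · intro h; exact absurd (Finset.mem_univ i) h

lemma bform_sroot_left (w : I → ℝ) (l : I) :
    bform M (sroot l) w = ∑ j, w j * cf M l j := by
  rw [bform_comm, bform_sroot_right]
  apply Finset.sum_congr rfl; intro j _
  rw [cf_comm]

lemma bform_expand_left (v w : I → ℝ) : bform M v w = ∑ l, v l * bform M (sroot l) w := by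
  rw [bform]
  apply Finset.sum_congr rfl; intro l _
  rw [bform_sroot_left, Finset.mul_sum]
  apply Finset.sum_congr rfl; intro j _
  ring

/- ### srefl basics -/

lemma srefl_def (k : I) (v : I → ℝ) :
    srefl M k v = v - bform M v (sroot k) • sroot k := rfl

lemma srefl_apply (k : I) (v : I → ℝ) (l : I) :
    srefl M k v l = v l - bform M v (sroot k) * sroot k l := rfl

lemma srefl_apply_ne (k : I) (v : I → ℝ) {l : I} (h : l ≠ k) :
    srefl M k v l = v l := by
  rw [srefl_apply, sroot, Pi.single_apply, if_neg h]; ring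

lemma srefl_apply_self (k : I) (v : I → ℝ) :
    srefl M k v k = v k - bform M v (sroot k) := by
  rw [srefl_apply, sroot, Pi.single_apply, if_pos rfl]; ring

lemma bform_srefl_left (k : I) (x z : I → ℝ) :
    bform M (srefl M k x) z = bform M x z - bform M x (sroot k) * bform M (sroot k) z := by
  rw [srefl_def, bform_sub_smul_left]

lemma bform_srefl_right (k : I) (x z : I → ℝ) :
    bform M z (srefl M k x) = bform M z x - bform M x (sroot k) * bform M z (sroot k) := by
  rw [srefl_def, bform_sub_smul_right]

lemma bform_srefl_srefl (k : I) (x y : I → ℝ) :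
    bform M (srefl M k x) (srefl M k y) = bform M x y := by
  rw [bform_srefl_left, bform_srefl_right, bform_srefl_right,
    bform_sroot_sroot, cf_self, bform_comm M (sroot k) y]
  ring

lemma srefl_srefl (k : I) (v : I → ℝ) : srefl M k (srefl M k v) = v := by
  funext l
  rw [srefl_apply, bform_srefl_left, bform_sroot_sroot, cf_self, srefl_apply]
  ring

lemma srefl_of_bform_eq_zero (k : I) {v : I → ℝ} (h : bform M v (sroot k) = 0) :
    srefl M k v = v := by
  rw [srefl_def, h, zero_smul, sub_zero]

lemma srefl_add (k : I) (x y : I → ℝ) : srefl M k (x + y) = srefl M k x + srefl M k y := by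
  funext l
  simp only [srefl_apply, bform_add_left, Pi.add_apply]
  ring

lemma srefl_smul (k : I) (r : ℝ) (x : I → ℝ) : srefl M k (r • x) = r • srefl M k x := by
  funext l
  simp only [srefl_apply, bform_smul_left, Pi.smul_apply, smul_eq_mul]
  ring

lemma srefl_neg (k : I) (x : I → ℝ) : srefl M k (-x) = -srefl M k x := by
  funext l
  simp only [srefl_apply, bform_neg_left, Pi.neg_apply]
  ring

lemma srefl_sroot_self (k : I) : srefl M k (sroot k) = -sroot k := by
  funext l
  rw [srefl_apply, bform_sroot_sroot, cf_self, Pi.neg_apply]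
  ring

lemma srefl_ne_self {k : I} {v : I → ℝ} (h : bform M v (sroot k) ≠ 0) :
    srefl M k v ≠ v := by
  intro he
  apply h
  have := congrFun he k
  rw [srefl_apply_self] at this
  linarith

/- ### the geometric representation of the Coxeter group -/

/-- The simple reflection as a linear automorphism. -/
noncomputable def sreflL (k : I) : (I → ℝ) ≃ₗ[ℝ] (I → ℝ) where
  toFun := srefl M k
  invFun := srefl M k
  map_add' := srefl_add M k
  map_smul' := srefl_smul M k
  left_inv := srefl_srefl M k
  right_inv := srefl_srefl M k

lemma sreflL_apply (k : I) (v : I → ℝ) : sreflL M k v = srefl M k v := rfl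

lemma sreflL_sq (k : I) : sreflL M k * sreflL M k = 1 := by
  apply LinearEquiv.toLinearMap_injective
  apply LinearMap.ext
  intro v
  show sreflL M k (sreflL M k v) = v
  rw [sreflL_apply, sreflL_apply, srefl_srefl]

lemma srefl_braid {i j : I} (hij : cf M i j = -1) (v : I → ℝ) :
    srefl M i (srefl M j (srefl M i (srefl M j (srefl M i (srefl M j v))))) = v := by
  have hji : cf M j i = -1 := by rw [cf_comm]; exact hij
  have hii := cf_self M i
  have hjj := cf_self M j
  funext l
  simp only [srefl_apply, bform_srefl_left, bform_sroot_sroot, hij, hji, hii, hjj]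
  ring

lemma coxRels_check (hs : M.Small) :
    ∀ r ∈ coxRels M, FreeGroup.lift (fun i => sreflL M i) r = 1 := by
  rintro r ⟨i, j, hm, rfl⟩
  rw [map_pow, map_mul, FreeGroup.lift_apply_of, FreeGroup.lift_apply_of]
  by_cases hij : i = j
  · subst hij
    rw [m_self, pow_one, sreflL_sq]
  · rcases m_cases M hs hij with h2 | h3
    · rw [h2]
      have hcomm : sreflL M i * sreflL M j = sreflL M j * sreflL M i := by
        apply LinearEquiv.toLinearMap_injective
        apply LinearMap.ext
        intro v
        show sreflL M i (sreflL M j v) = sreflL M j (sreflL M i v)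
        have hij0 : cf M i j = 0 := cf_two M h2
        have hji0 : cf M j i = 0 := by rw [cf_comm]; exact hij0
        simp only [sreflL_apply]
        funext l
        simp only [srefl_apply, bform_srefl_left, bform_sroot_sroot, hij0, hji0]
        ring
      have h1 : (sreflL M i * sreflL M j) ^ 2
          = sreflL M i * (sreflL M j * sreflL M i) * sreflL M j := by
        rw [sq]; simp only [mul_assoc]
      rw [h1, ← hcomm]
      have h2' : sreflL M i * (sreflL M i * sreflL M j) * sreflL M j
          = (sreflL M i * sreflL M i) * (sreflL M j * sreflL M j) := by
        simp only [mul_assoc]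
      rw [h2', sreflL_sq, sreflL_sq, one_mul]
    · rw [h3]
      have hcf : cf M i j = -1 := cf_three M h3
      apply LinearEquiv.toLinearMap_injective
      apply LinearMap.ext
      intro v
      show ((sreflL M i * sreflL M j) ^ 3) v = v
      have h31 : (sreflL M i * sreflL M j) ^ 3 =
          sreflL M i * (sreflL M j * (sreflL M i * (sreflL M j * (sreflL M i * sreflL M j)))) := by
        rw [pow_succ, pow_succ, pow_one]; simp only [mul_assoc]
      rw [h31]
      show sreflL M i ((sreflL M j) ((sreflL M i) ((sreflL M j) ((sreflL M i) ((sreflL M j) v))))) = v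
      simp only [sreflL_apply]
      exact srefl_braid M hcf v

/-- The geometric representation of the Coxeter group. -/
noncomputable def rho (hs : M.Small) : CoxG M →* ((I → ℝ) ≃ₗ[ℝ] (I → ℝ)) :=
  PresentedGroup.toGroup (coxRels_check M hs)

lemma rho_of (hs : M.Small) (i : I) : rho M hs (PresentedGroup.of i) = sreflL M i :=
  PresentedGroup.toGroup.of (coxRels_check M hs)

lemma rho_prop (hs : M.Small) (P : ((I → ℝ) ≃ₗ[ℝ] (I → ℝ)) → Prop)
    (h1 : P 1) (hgen : ∀ i, P (sreflL M i)) (hinv : ∀ e, P e → P e⁻¹)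
    (hmul : ∀ e f, P e → P f → P (e * f)) :
    ∀ g : CoxG M, P (rho M hs g) := by
  intro g
  induction g using PresentedGroup.induction_on with
  | H z =>
    induction z using FreeGroup.induction_on with
    | C1 => rw [map_one]; exact h1
    | of i =>
      show P (rho M hs (PresentedGroup.of i))
      rw [rho_of]
      exact hgen i
    | inv_of i ih =>
      erw [map_inv, map_inv]
      exact hinv _ ih
    | mul x y ihx ihy =>
      erw [map_mul, map_mul]
      exact hmul _ _ ihx ihy

lemma rho_bform (hs : M.Small) (g : CoxG M) (x y : I → ℝ) :
    bform M (rho M hs g x) (rho M hs g y) = bform M x y := by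
  revert x y
  refine rho_prop M hs (fun e => ∀ x y, bform M (e x) (e y) = bform M x y) ?_ ?_ ?_ ?_ g
  · intro x y; rfl
  · intro i x y; exact bform_srefl_srefl M i x y
  · intro e he x y
    have := he (e⁻¹ x) (e⁻¹ y)
    rw [show e (e⁻¹ x) = x from e.apply_symm_apply x,
      show e (e⁻¹ y) = y from e.apply_symm_apply y] at this
    exact this.symm
  · intro e f he hf x y
    show bform M (e (f x)) (e (f y)) = _
    rw [he, hf]

lemma rho_isRoot (hs : M.Small) (g : CoxG M) {v : I → ℝ} (hv : IsRoot M v) :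
    IsRoot M (rho M hs g v) := by
  have H := rho_prop M hs
    (fun e => (∀ w, IsRoot M w → IsRoot M (e w)) ∧ (∀ w, IsRoot M w → IsRoot M (e⁻¹ w)))
    ⟨fun w hw => hw, fun w hw => hw⟩
    (fun i => ⟨fun w hw => IsRoot.srefl i w hw,
      fun w hw => IsRoot.srefl i w hw⟩)
    (fun e he => ⟨he.2, by rw [inv_inv]; exact he.1⟩)
    (fun e f he hf => ⟨fun w hw => he.1 _ (hf.1 _ hw),
      fun w hw => by rw [mul_inv_rev]; exact hf.2 _ (he.2 _ hw)⟩)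
    g
  exact H.1 v hv

lemma isRoot_repr (hs : M.Small) {v : I → ℝ} (hv : IsRoot M v) :
    ∃ (g : CoxG M) (k : I), rho M hs g (sroot k) = v := by
  induction hv with
  | simple i => exact ⟨1, i, by rw [map_one]; rfl⟩
  | srefl i w hw ih =>
    obtain ⟨g, k, hk⟩ := ih
    refine ⟨(show CoxG M from PresentedGroup.of i) * g, k, ?_⟩
    rw [map_mul]
    show (rho M hs (PresentedGroup.of i)) ((rho M hs g) (sroot k)) = _
    rw [hk, rho_of]
    rfl

lemma isRoot_norm {v : I → ℝ} (hv : IsRoot M v) : bform M v v = 2 := by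
  induction hv with
  | simple i => rw [bform_sroot_sroot, cf_self]
  | srefl i w _ ih => rw [show LK.srefl M i w = srefl M i w from rfl, bform_srefl_srefl]; exact ih

lemma isRoot_ne_zero {v : I → ℝ} (hv : IsRoot M v) : v ≠ 0 := by
  intro h
  have := isRoot_norm M hv
  rw [h, bform_zero_left] at this
  norm_num at this

lemma isRoot_neg {v : I → ℝ} (hv : IsRoot M v) : IsRoot M (-v) := by
  induction hv with
  | simple i =>
    have : -sroot i = LK.srefl M i (sroot i) := (srefl_sroot_self M i).symm
    rw [this]
    exact IsRoot.srefl i _ (IsRoot.simple i)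
  | srefl i w _ ih =>
    have : -LK.srefl M i w = LK.srefl M i (-w) := (srefl_neg M i w).symm
    rw [this]
    exact IsRoot.srefl i _ ih

/-- Finiteness of the set of positive roots in the spherical case. -/
lemma finite_pos (hs : M.Small) (hsph : Spherical M) : Finite (Pos M) := by
  haveI : Finite (CoxG M) := hsph
  have hsub : {v : I → ℝ | IsPos M v} ⊆
      Set.range (fun p : CoxG M × I => rho M hs p.1 (sroot p.2)) := by
    intro v hv
    obtain ⟨g, k, hk⟩ := isRoot_repr M hs hv.1
    exact ⟨(g, k), hk⟩
  have hfin : {v : I → ℝ | IsPos M v}.Finite :=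
    Set.Finite.subset (Set.finite_range _) hsub
  exact hfin.to_subtype

/- ### bounds on the bilinear form between roots -/

lemma rho_pow_apply (hs : M.Small) (g : CoxG M) (n : ℕ) (v : I → ℝ) :
    rho M hs (g ^ n) v = ((rho M hs g) ^ n) v := by
  rw [map_pow]

/-- reflection along a root -/
lemma exists_reflection (hs : M.Small) {α : I → ℝ} (hα : IsRoot M α) :
    ∃ t : CoxG M, ∀ v, rho M hs t v = v - bform M v α • α := by
  obtain ⟨g, k, hk⟩ := isRoot_repr M hs hα
  refine ⟨g * (show CoxG M from PresentedGroup.of k) * g⁻¹, fun v => ?_⟩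
  have hg : ∀ w, (rho M hs g) ((rho M hs g⁻¹) w) = w := by
    intro w
    rw [map_inv]
    exact (rho M hs g).apply_symm_apply w
  rw [map_mul, map_mul, rho_of]
  show (rho M hs g) ((sreflL M k) ((rho M hs g⁻¹) v)) = _
  rw [sreflL_apply, srefl_def, map_sub, map_smul, hg, hk]
  congr 2
  rw [← rho_bform M hs g ((rho M hs g⁻¹) v) (sroot k), hg, hk]

/-- In the spherical case, `(α|β) = 2` forces `α = β` for roots. -/
lemma root_bform_eq_two (hs : M.Small) (hsph : Spherical M) {α β : I → ℝ}
    (hα : IsRoot M α) (hβ : IsRoot M β) (h2 : bform M α β = 2) : α = β := by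
  haveI : Finite (CoxG M) := hsph
  obtain ⟨ta, hta⟩ := exists_reflection M hs hα
  obtain ⟨tb, htb⟩ := exists_reflection M hs hβ
  set c := ta * tb with hc
  have hna := isRoot_norm M hα
  have hnb := isRoot_norm M hβ
  have hba : bform M β α = 2 := by rw [bform_comm]; exact h2
  have hgα : rho M hs c α = α + (2:ℝ) • (α - β) := by
    rw [hc, map_mul]
    show (rho M hs ta) ((rho M hs tb) α) = _
    rw [htb, h2, hta]
    funext l
    have e1 : bform M (α - (2:ℝ) • β) α = -2 := by
      rw [bform_sub_smul_left, hna, hba]; ring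
    rw [e1]
    simp only [Pi.add_apply, Pi.sub_apply, Pi.smul_apply, smul_eq_mul]
    ring
  have hgu : rho M hs c (α - β) = α - β := by
    rw [hc, map_mul]
    show (rho M hs ta) ((rho M hs tb) (α - β)) = _
    have e1 : bform M (α - β) β = 0 := by
      rw [sub_eq_add_neg, bform_add_left, bform_neg_left, h2, hnb]; ring
    have e2 : bform M (α - β) α = 0 := by
      rw [sub_eq_add_neg, bform_add_left, bform_neg_left, hna, hba]; ring
    rw [htb, e1, zero_smul, sub_zero, hta, e2, zero_smul, sub_zero]
  have hiter : ∀ n : ℕ, rho M hs (c ^ n) α = α + (2 * n : ℝ) • (α - β) := by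
    intro n
    induction n with
    | zero =>
      rw [pow_zero, map_one]
      show α = α + (2 * ((0:ℕ):ℝ)) • (α - β)
      simp
    | succ n ih =>
      rw [pow_succ', map_mul]
      show (rho M hs c) ((rho M hs (c ^ n)) α) = _
      rw [ih, map_add, map_smul, hgα, hgu]
      funext l
      simp only [Pi.add_apply, Pi.smul_apply, smul_eq_mul]
      push_cast
      ring
  have hord : c ^ (orderOf c) = 1 := pow_orderOf_eq_one c
  have hpos : 0 < orderOf c := (isOfFinOrder_of_finite c).orderOf_pos
  have hthis := hiter (orderOf c)
  rw [hord, map_one] at hthis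
  have h' : α = α + (2 * (orderOf c : ℝ)) • (α - β) := hthis
  have h0 : (2 * (orderOf c : ℝ)) • (α - β) = 0 := left_eq_add.mp h'
  have hocR : (0:ℝ) < (orderOf c : ℝ) := by exact_mod_cast hpos
  have hn0 : (2 * (orderOf c : ℝ)) ≠ 0 := by positivity
  rcases smul_eq_zero.mp h0 with h | h
  · exact absurd h hn0
  · exact sub_eq_zero.mp h

/-- In the spherical case, `(α|β) ≤ 2` for roots. -/
lemma root_bform_le_two (hs : M.Small) (hsph : Spherical M) {α β : I → ℝ}
    (hα : IsRoot M α) (hβ : IsRoot M β) : bform M α β ≤ 2 := by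
  by_contra hgt
  push_neg at hgt
  haveI : Finite (CoxG M) := hsph
  obtain ⟨ta, hta⟩ := exists_reflection M hs hα
  obtain ⟨tb, htb⟩ := exists_reflection M hs hβ
  have hna := isRoot_norm M hα
  have hnb := isRoot_norm M hβ
  have hba : bform M β α = bform M α β := bform_comm M β α
  set t := bform M α β with ht
  obtain ⟨lam, hlam1, hlam2⟩ : ∃ lam : ℝ, 1 < lam ∧ lam * lam = (t*t - 2) * lam - 1 := by
    have h1 : (2:ℝ) < t*t - 2 := by nlinarith
    have hd : (0:ℝ) ≤ (t*t-2)^2 - 4 := by nlinarith [h1, sq_nonneg (t*t-2)]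
    refine ⟨((t*t-2) + Real.sqrt ((t*t-2)^2 - 4))/2, ?_, ?_⟩
    · have := Real.sqrt_nonneg ((t*t-2)^2 - 4)
      nlinarith
    · have h := Real.sq_sqrt hd
      linear_combination h/4
  set μ := lam - t*t + 1 with hμ
  set w := t • α + μ • β with hw
  have hBwβ : bform M w β = t*t + μ*2 := by
    rw [hw, bform_add_left, bform_smul_left, bform_smul_left, hnb]
  have hBwα : bform M w α = t*2 + μ*t := by
    rw [hw, bform_add_left, bform_smul_left, bform_smul_left, hna, hba]
  set c := ta * tb with hc
  have hstep : rho M hs c w = lam • w := by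
    rw [hc, map_mul]
    show (rho M hs ta) ((rho M hs tb) w) = _
    rw [htb w, hBwβ, hta]
    have hB2 : bform M (w - (t*t + μ*2) • β) α = t*2 + μ*t - (t*t + μ*2)*t := by
      rw [bform_sub_smul_left, hBwα, hba]
    rw [hB2]
    funext l
    simp only [hw, Pi.add_apply, Pi.sub_apply, Pi.smul_apply, smul_eq_mul]
    have hμ' : μ = lam - t*t + 1 := hμ
    linear_combination (t * α l - (1 + lam) * β l) * hμ' - (β l) * hlam2
  have hiter : ∀ n : ℕ, rho M hs (c ^ n) w = lam ^ n • w := by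
    intro n
    induction n with
    | zero =>
      rw [pow_zero, map_one, pow_zero, one_smul]
      rfl
    | succ n ih =>
      rw [pow_succ', map_mul]
      show (rho M hs c) ((rho M hs (c ^ n)) w) = _
      rw [ih, map_smul, hstep, smul_smul, ← pow_succ]
  have hord : c ^ (orderOf c) = 1 := pow_orderOf_eq_one c
  have hpos : 0 < orderOf c := (isOfFinOrder_of_finite c).orderOf_pos
  have hthis := hiter (orderOf c)
  rw [hord, map_one] at hthis
  have h' : w = lam ^ (orderOf c) • w := hthis
  have hlampow : 1 < lam ^ (orderOf c) := one_lt_pow₀ hlam1 hpos.ne'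
  have hw0 : w = 0 := by
    have h0 : (lam ^ (orderOf c) - 1) • w = 0 := by
      rw [sub_smul, one_smul, ← h', sub_self]
    rcases smul_eq_zero.mp h0 with h | h
    · exfalso; linarith [sub_eq_zero.mp h]
    · exact h
  have e1 : t*t + μ*2 = 0 := by rw [← hBwβ, hw0, bform_zero_left]
  have e2 : t*2 + μ*t = 0 := by rw [← hBwα, hw0, bform_zero_left]
  have hμ2 : μ = -2 := by
    have htpos : 0 < t := by linarith
    nlinarith
  nlinarith

lemma root_bform_ge (hs : M.Small) (hsph : Spherical M) {α β : I → ℝ}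
    (hα : IsRoot M α) (hβ : IsRoot M β) : -2 ≤ bform M α β := by
  have := root_bform_le_two M hs hsph hα (isRoot_neg M hβ)
  have hneg : bform M α (-β) = -bform M α β := by
    rw [bform_comm, bform_neg_left, bform_comm]
  rw [hneg] at this
  linarith

lemma root_bform_eq_neg_two (hs : M.Small) (hsph : Spherical M) {α β : I → ℝ}
    (hα : IsRoot M α) (hβ : IsRoot M β) (h : bform M α β = -2) : α = -β := by
  have hneg : bform M α (-β) = 2 := by
    rw [bform_comm, bform_neg_left, bform_comm, h]; ring
  exact root_bform_eq_two M hs hsph hα (isRoot_neg M hβ) hneg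

/- ### integrality -/

/-- real numbers that are integers -/
def IsZ (x : ℝ) : Prop := ∃ z : ℤ, x = z

lemma IsZ.add {x y : ℝ} (hx : IsZ x) (hy : IsZ y) : IsZ (x + y) := by
  obtain ⟨zx, rfl⟩ := hx; obtain ⟨zy, rfl⟩ := hy
  exact ⟨zx + zy, by push_cast; ring⟩

lemma IsZ.mul {x y : ℝ} (hx : IsZ x) (hy : IsZ y) : IsZ (x * y) := by
  obtain ⟨zx, rfl⟩ := hx; obtain ⟨zy, rfl⟩ := hy
  exact ⟨zx * zy, by push_cast; ring⟩

lemma IsZ.sub {x y : ℝ} (hx : IsZ x) (hy : IsZ y) : IsZ (x - y) := by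
  obtain ⟨zx, rfl⟩ := hx; obtain ⟨zy, rfl⟩ := hy
  exact ⟨zx - zy, by push_cast; ring⟩

lemma IsZ.zero : IsZ 0 := ⟨0, by norm_num⟩
lemma IsZ.one : IsZ 1 := ⟨1, by norm_num⟩

lemma IsZ.sum {s : Finset I} {f : I → ℝ} (h : ∀ i ∈ s, IsZ (f i)) : IsZ (∑ i ∈ s, f i) := by
  classical
  induction s using Finset.induction_on with
  | empty => simpa using IsZ.zero
  | @insert a s' hni ih =>
    rw [Finset.sum_insert hni]
    exact (h a (Finset.mem_insert_self a s')).add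
      (ih fun i hi => h i (Finset.mem_insert_of_mem hi))

lemma cf_isZ (hs : M.Small) (i j : I) : IsZ (cf M i j) := by
  by_cases hij : i = j
  · subst hij; rw [cf_self]; exact ⟨2, by norm_num⟩
  · rcases m_cases M hs hij with h2 | h3
    · rw [cf_two M h2]; exact IsZ.zero
    · rw [cf_three M h3]; exact ⟨-1, by norm_num⟩

lemma isRoot_coord_isZ (hs : M.Small) {v : I → ℝ} (hv : IsRoot M v) : ∀ l, IsZ (v l) := by
  induction hv with
  | simple i =>
    intro l
    rw [sroot, Pi.single_apply]
    split
    · exact IsZ.one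
    · exact IsZ.zero
  | srefl i w hw ih =>
    intro l
    show IsZ (srefl M i w l)
    rw [srefl_apply, bform_sroot_right]
    refine IsZ.sub (ih l) (IsZ.mul (IsZ.sum fun m _ => IsZ.mul (ih m) (cf_isZ M hs m i)) ?_)
    rw [sroot, Pi.single_apply]
    split
    · exact IsZ.one
    · exact IsZ.zero

lemma isRoot_bform_sroot_isZ (hs : M.Small) {v : I → ℝ} (hv : IsRoot M v) (k : I) :
    IsZ (bform M v (sroot k)) := by
  rw [bform_sroot_right]
  exact IsZ.sum fun m _ => IsZ.mul (isRoot_coord_isZ M hs hv m) (cf_isZ M hs m k)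

lemma int_le_of_lt {x y : ℝ} (hx : IsZ x) (hy : IsZ y) (h : x < y) : x + 1 ≤ y := by
  obtain ⟨zx, rfl⟩ := hx; obtain ⟨zy, rfl⟩ := hy
  have : zx < zy := by exact_mod_cast h
  have : zx + 1 ≤ zy := this
  exact_mod_cast this

/- ### positivity of reflections of positive roots -/

lemma bform_nonpos_of_coord_zero (hs : M.Small) {α : I → ℝ} (hα : ∀ l, 0 ≤ α l) {k : I}
    (hk : α k = 0) : bform M α (sroot k) ≤ 0 := by
  rw [bform_sroot_right]
  apply Finset.sum_nonpos
  intro l _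
  by_cases hlk : l = k
  · subst hlk; rw [hk]; ring_nf; exact le_of_eq rfl
  · exact mul_nonpos_of_nonneg_of_nonpos (hα l) (cf_nonpos M hs hlk)

lemma isPos_srefl (hs : M.Small) (hsph : Spherical M) {α : I → ℝ} (hpos : IsPos M α) {k : I}
    (hk : α ≠ sroot k) : IsPos M (srefl M k α) := by
  refine ⟨IsRoot.srefl k α hpos.1, fun l => ?_⟩
  by_cases hlk : l = k
  · subst hlk
    rw [srefl_apply_self]
    by_contra hneg
    push_neg at hneg
    rw [sub_lt_iff_lt_add, zero_add] at hneg
    have hBz : IsZ (bform M α (sroot l)) := isRoot_bform_sroot_isZ M hs hpos.1 l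
    have hcz : IsZ (α l) := isRoot_coord_isZ M hs hpos.1 l
    by_cases hc0 : α l = 0
    · have := bform_nonpos_of_coord_zero M hs hpos.2 hc0
      rw [hc0] at hneg
      linarith
    · have hc1 : (1:ℝ) ≤ α l := by
        have := int_le_of_lt IsZ.zero hcz (lt_of_le_of_ne (hpos.2 l) (Ne.symm hc0))
        linarith
      have hB2 : (2:ℝ) ≤ bform M α (sroot l) := by
        have := int_le_of_lt hcz hBz hneg
        linarith
      have hle2 := root_bform_le_two M hs hsph hpos.1 (IsRoot.simple l)
      have heq2 : bform M α (sroot l) = 2 := le_antisymm hle2 hB2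
      exact hk (root_bform_eq_two M hs hsph hpos.1 (IsRoot.simple l) heq2)
  · rw [srefl_apply_ne M k α hlk]; exact hpos.2 l

/- ### depth -/

/-- the defining set for depth -/
def depSet (v : I → ℝ) : Set ℕ :=
  {n | ∃ l : List I, l.length = n ∧ ∃ k, l.foldr (srefl M) v k < 0}

lemma dep_eq_sInf (v : I → ℝ) : dep M v = sInf (depSet M v) := rfl

lemma one_mem_depSet_sroot (i : I) : 1 ∈ depSet M (sroot i) := by
  refine ⟨[i], rfl, i, ?_⟩
  show srefl M i (sroot i) i < 0
  rw [srefl_sroot_self]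
  simp [sroot]

lemma zero_notMem_depSet {α : I → ℝ} (hpos : ∀ l, 0 ≤ α l) : 0 ∉ depSet M α := by
  rintro ⟨l, hlen, k, hneg⟩
  rw [List.length_eq_zero_iff] at hlen
  subst hlen
  exact absurd hneg (not_lt.mpr (hpos k))

lemma sum_srefl (k : I) (α : I → ℝ) :
    ∑ l, srefl M k α l = (∑ l, α l) - bform M α (sroot k) := by
  have h1 : ∑ l, srefl M k α l = ∑ l, (α l - bform M α (sroot k) * sroot k l) :=
    Finset.sum_congr rfl fun l _ => by rw [srefl_apply]
  rw [h1, Finset.sum_sub_distrib, ← Finset.mul_sum]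
  have h2 : ∑ l, sroot k l = 1 := by simp [sroot, Pi.single_apply]
  rw [h2, mul_one]

lemma depSet_nonempty_aux (hs : M.Small) (hsph : Spherical M) :
    ∀ N : ℕ, ∀ α : I → ℝ, IsPos M α → (∑ l, α l) ≤ N → (depSet M α).Nonempty := by
  intro N
  induction N with
  | zero =>
    intro α hpos hsum
    exfalso
    have hz : α = 0 := by
      funext l
      have h0 : ∑ l, α l = 0 :=
        le_antisymm (by exact_mod_cast hsum) (Finset.sum_nonneg fun l _ => hpos.2 l)
      have := (Finset.sum_eq_zero_iff_of_nonneg (fun l _ => hpos.2 l)).mp h0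
      exact this l (Finset.mem_univ l)
    exact isRoot_ne_zero M hpos.1 hz
  | succ N ih =>
    intro α hpos hsum
    by_cases hsimp : ∃ k, α = sroot k
    · obtain ⟨k, rfl⟩ := hsimp
      exact ⟨1, one_mem_depSet_sroot M k⟩
    · push_neg at hsimp
      have h2 : bform M α α = 2 := isRoot_norm M hpos.1
      have hex : ∃ l, 0 < α l * bform M (sroot l) α := by
        by_contra hno
        push_neg at hno
        have hle : bform M α α ≤ 0 := by
          rw [bform_expand_left]
          exact Finset.sum_nonpos fun l _ => hno l
        linarith
      obtain ⟨l0, hl0⟩ := hex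
      have hB : 0 < bform M α (sroot l0) := by
        rcases mul_pos_iff.mp hl0 with ⟨h1, h2'⟩ | ⟨h1, h2'⟩
        · rw [bform_comm]; exact h2'
        · exact absurd h1 (not_lt.mpr (hpos.2 l0))
      have hβpos : IsPos M (srefl M l0 α) := isPos_srefl M hs hsph hpos (hsimp l0)
      have hB1 : (1:ℝ) ≤ bform M α (sroot l0) := by
        have := int_le_of_lt IsZ.zero (isRoot_bform_sroot_isZ M hs hpos.1 l0) hB
        linarith
      have hsum' : (∑ l, srefl M l0 α l) ≤ N := by
        rw [sum_srefl]
        push_cast at hsum ⊢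
        linarith
      obtain ⟨n, llist, hlen, k0, hneg⟩ := ih _ hβpos hsum'
      refine ⟨n + 1, llist ++ [l0], by simp [hlen], k0, ?_⟩
      rw [List.foldr_append]
      exact hneg

lemma depSet_nonempty (hs : M.Small) (hsph : Spherical M) {α : I → ℝ} (hpos : IsPos M α) :
    (depSet M α).Nonempty := by
  obtain ⟨N, hN⟩ := exists_nat_ge (∑ l, α l)
  exact depSet_nonempty_aux M hs hsph N α hpos hN

lemma dep_sroot (i : I) : dep M (sroot i) = 1 := by
  rw [dep_eq_sInf]
  have h1 := one_mem_depSet_sroot M i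
  have h0 := zero_notMem_depSet M (fun l => (isPos_sroot M i).2 l)
  refine le_antisymm (Nat.sInf_le h1) ?_
  rcases Nat.eq_zero_or_pos (sInf (depSet M (sroot i))) with h | h
  · exact absurd (h ▸ Nat.sInf_mem ⟨1, h1⟩) h0
  · exact h

lemma dep_pos (hs : M.Small) (hsph : Spherical M) {α : I → ℝ} (hpos : IsPos M α) :
    0 < dep M α := by
  rcases Nat.eq_zero_or_pos (dep M α) with h | h
  · rw [dep_eq_sInf] at h
    exact absurd (h ▸ Nat.sInf_mem (depSet_nonempty M hs hsph hpos))
      (zero_notMem_depSet M hpos.2)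
  · exact h

lemma dep_le_srefl_add_one (hs : M.Small) (hsph : Spherical M) {α : I → ℝ} {k : I}
    (hβpos : IsPos M (srefl M k α)) : dep M α ≤ dep M (srefl M k α) + 1 := by
  obtain ⟨llist, hlen, k0, hneg⟩ := Nat.sInf_mem (depSet_nonempty M hs hsph hβpos)
  rw [dep_eq_sInf M α]
  apply Nat.sInf_le
  refine ⟨llist ++ [k], by simp [hlen, dep_eq_sInf], k0, ?_⟩
  rw [List.foldr_append]
  exact hneg

lemma simple_of_dep_one (hs : M.Small) (hsph : Spherical M) {α : I → ℝ} (hpos : IsPos M α)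
    (h1 : dep M α = 1) : ∃ k, α = sroot k := by
  have hmem : 1 ∈ depSet M α := by
    rw [← h1, dep_eq_sInf]
    exact Nat.sInf_mem (depSet_nonempty M hs hsph hpos)
  obtain ⟨llist, hlen, k0, hneg⟩ := hmem
  obtain ⟨j, rfl⟩ := List.length_eq_one_iff.mp hlen
  by_cases hj : α = sroot j
  · exact ⟨j, hj⟩
  · exfalso
    have := (isPos_srefl M hs hsph hpos hj).2 k0
    exact absurd hneg (not_lt.mpr this)

lemma exists_descent (hs : M.Small) (hsph : Spherical M) {α : I → ℝ} (hpos : IsPos M α)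
    (h2 : 2 ≤ dep M α) :
    ∃ k, IsPos M (srefl M k α) ∧ dep M (srefl M k α) + 1 = dep M α := by
  obtain ⟨llist, hlen, k0, hneg⟩ := Nat.sInf_mem (depSet_nonempty M hs hsph hpos)
  rcases List.eq_nil_or_concat' llist with rfl | ⟨L, b, rfl⟩
  · rw [← dep_eq_sInf] at hlen
    rw [← hlen] at h2
    norm_num at h2
  · rw [List.foldr_append] at hneg
    rw [List.length_append, ← dep_eq_sInf] at hlen
    have hβpos : IsPos M (srefl M b α) := by
      refine ⟨IsRoot.srefl b α hpos.1, fun l => ?_⟩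
      by_contra hneg'
      push_neg at hneg'
      have hmem1 : 1 ∈ depSet M α := ⟨[b], rfl, l, hneg'⟩
      have := Nat.sInf_le hmem1
      rw [← dep_eq_sInf] at this
      omega
    refine ⟨b, hβpos, ?_⟩
    have hle : dep M (srefl M b α) ≤ L.length := by
      rw [dep_eq_sInf]
      exact Nat.sInf_le ⟨L, rfl, k0, hneg⟩
    have hge := dep_le_srefl_add_one M hs hsph hβpos
    simp only [List.length_singleton] at hlen
    omega

lemma bform_eq_one (hs : M.Small) (hsph : Spherical M) {α : I → ℝ} (hpos : IsPos M α) {k : I}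
    (hne : α ≠ sroot k) (hB : 0 < bform M α (sroot k)) : bform M α (sroot k) = 1 := by
  have hz := isRoot_bform_sroot_isZ M hs hpos.1 k
  have h1 : (1:ℝ) ≤ bform M α (sroot k) := by
    have := int_le_of_lt IsZ.zero hz hB
    linarith
  have h2 := root_bform_le_two M hs hsph hpos.1 (IsRoot.simple k)
  by_cases hB2 : bform M α (sroot k) = 2
  · exact absurd (root_bform_eq_two M hs hsph hpos.1 (IsRoot.simple k) hB2) hne
  · have hlt : bform M α (sroot k) < 2 := lt_of_le_of_ne h2 hB2
    have := int_le_of_lt hz ⟨2, by norm_num⟩ hlt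
    linarith

/-- The depth-sign lemma: reflecting a positive root along a simple root with positive
pairing strictly decreases depth. -/
lemma dep_drop (hs : M.Small) (hsph : Spherical M) :
    ∀ n : ℕ, ∀ (α : I → ℝ) (k : I), IsPos M α → dep M α = n →
    α ≠ sroot k → 0 < bform M α (sroot k) →
    IsPos M (srefl M k α) ∧ dep M (srefl M k α) + 1 = dep M α := by
  intro n
  induction n using Nat.strong_induction_on with
  | _ n ih =>
  intro α k hpos hdep hne hB
  have hβpos := isPos_srefl M hs hsph hpos hne
  refine ⟨hβpos, ?_⟩
  have ht1 : bform M α (sroot k) = 1 := bform_eq_one M hs hsph hpos hne hB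
  have hnpos : 0 < n := hdep ▸ dep_pos M hs hsph hpos
  by_cases hn1 : n = 1
  · exfalso
    obtain ⟨j0, rfl⟩ := simple_of_dep_one M hs hsph hpos (by omega)
    have hj0k : j0 ≠ k := fun h => hne (by rw [h])
    have := cf_nonpos M hs hj0k
    rw [bform_sroot_sroot] at hB
    linarith
  have hn2 : 2 ≤ n := by omega
  obtain ⟨j, hjpos, hjdep⟩ := exists_descent M hs hsph hpos (by omega)
  by_cases hjk : j = k
  · subst hjk; omega
  have hnej : α ≠ sroot j := by
    intro h
    rw [h, dep_sroot] at hdep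
    omega
  have htj : bform M α (sroot j) = 1 := by
    have h0 : bform M α (sroot j) ≠ 0 := by
      intro h0
      rw [srefl_of_bform_eq_zero M j h0] at hjdep
      omega
    have hposj : 0 < bform M α (sroot j) := by
      rcases lt_or_gt_of_ne h0 with hlt | hgt
      · exfalso
        have hγB : 0 < bform M (srefl M j α) (sroot j) := by
          rw [bform_srefl_left, bform_sroot_sroot, cf_self]
          linarith
        have hγne : srefl M j α ≠ sroot j := by
          intro h
          have hα : α = -sroot j := by rw [← srefl_srefl M j α, h, srefl_sroot_self]
          have h' := hpos.2 j
          rw [hα] at h'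
          have : (0:ℝ) ≤ -1 := by simpa [sroot] using h'
          linarith
        have hres := ih (dep M (srefl M j α)) (by omega) (srefl M j α) j hjpos rfl hγne hγB
        rw [srefl_srefl] at hres
        omega
      · exact hgt
    exact bform_eq_one M hs hsph hpos hnej hposj
  rcases m_cases M hs hjk with hm2 | hm3
  · -- m j k = 2
    have hcf : cf M j k = 0 := cf_two M hm2
    have hcf' : cf M k j = 0 := by rw [cf_comm]; exact hcf
    have hγk1 : bform M (srefl M j α) (sroot k) = 1 := by
      rw [bform_srefl_left, bform_sroot_sroot, hcf, htj, ht1]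
      ring
    have hγnek : srefl M j α ≠ sroot k := by
      intro h
      have h2' : bform M (srefl M j α) (sroot k) = 2 := by
        rw [h, bform_sroot_sroot, cf_self]
      rw [hγk1] at h2'
      norm_num at h2'
    have hIH := ih (dep M (srefl M j α)) (by omega) (srefl M j α) k hjpos rfl hγnek
      (by rw [hγk1]; norm_num)
    have hswap : srefl M j (srefl M k α) = srefl M k (srefl M j α) := by
      funext l
      simp only [srefl_apply, bform_srefl_left, bform_sroot_sroot, hcf, hcf', htj, ht1]
      ring
    have hδpos : IsPos M (srefl M j (srefl M k α)) := by rw [hswap]; exact hIH.1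
    have h1' : dep M (srefl M k α) ≤ dep M (srefl M j (srefl M k α)) + 1 :=
      dep_le_srefl_add_one M hs hsph hδpos
    have h2' : dep M α ≤ dep M (srefl M k α) + 1 := dep_le_srefl_add_one M hs hsph hβpos
    have h3' : dep M (srefl M j (srefl M k α)) = dep M (srefl M k (srefl M j α)) := by
      rw [hswap]
    omega
  · -- m j k = 3
    have hcf : cf M j k = -1 := cf_three M hm3
    have hcf' : cf M k j = -1 := by rw [cf_comm]; exact hcf
    have hγk2 : bform M (srefl M j α) (sroot k) = 2 := by
      rw [bform_srefl_left, bform_sroot_sroot, hcf, htj, ht1]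
      ring
    have hγ : srefl M j α = sroot k :=
      root_bform_eq_two M hs hsph hjpos.1 (IsRoot.simple k) hγk2
    have hα : α = srefl M j (sroot k) := by rw [← hγ, srefl_srefl]
    have hα' : α = sroot k + sroot j := by
      rw [hα, srefl_def, bform_sroot_sroot, cf_comm, hcf]
      rw [neg_smul, one_smul, sub_neg_eq_add]
    have hβ : srefl M k α = sroot j := by
      rw [srefl_def, ht1, one_smul, hα']
      abel
    have hdepγ : dep M (srefl M j α) = 1 := by rw [hγ, dep_sroot]
    rw [hβ, dep_sroot]
    omega

lemma descent_bform_one (hs : M.Small) (hsph : Spherical M) {α : I → ℝ} {k : I}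
    (hpos : IsPos M α) (hk : IsPos M (srefl M k α))
    (hdep : dep M (srefl M k α) + 1 = dep M α) (hne : α ≠ sroot k) :
    bform M α (sroot k) = 1 := by
  have h0 : bform M α (sroot k) ≠ 0 := by
    intro h0
    rw [srefl_of_bform_eq_zero M k h0] at hdep
    omega
  rcases lt_or_gt_of_ne h0 with hlt | hgt
  · exfalso
    have hγB : 0 < bform M (srefl M k α) (sroot k) := by
      rw [bform_srefl_left, bform_sroot_sroot, cf_self]
      linarith
    have hγne : srefl M k α ≠ sroot k := by
      intro h
      have hα : α = -sroot k := by rw [← srefl_srefl M k α, h, srefl_sroot_self]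
      have h' := hpos.2 k
      rw [hα] at h'
      have : (0:ℝ) ≤ -1 := by simpa [sroot] using h'
      linarith
    have hres := dep_drop M hs hsph (dep M (srefl M k α)) (srefl M k α) k hk rfl hγne hγB
    rw [srefl_srefl] at hres
    omega
  · exact bform_eq_one M hs hsph hpos hne hgt

lemma srefl_ne_sroot_self_of_pos (hs : M.Small) {α : I → ℝ} (hpos : IsPos M α) (k : I) :
    srefl M k α ≠ sroot k := by
  intro h
  have hα : α = -sroot k := by rw [← srefl_srefl M k α, h, srefl_sroot_self]
  have h' := hpos.2 k
  rw [hα] at h'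
  have : (0:ℝ) ≤ -1 := by simpa [sroot] using h'
  linarith

section WithRing

variable (R : Type) [CommRing R] (a b c d : R)

lemma ev_eq {α β : Pos M} (h : α.1 = β.1) : ev M R α = ev M R β := by
  congr 1
  exact Subtype.ext h

lemma phi_ev (i : I) (α : Pos M) :
    phi M R a b c d i (ev M R α) = phiAux M R a b c d i α := by
  rw [phi, ev, Finsupp.lift_apply, Finsupp.sum_single_index, one_smul]
  exact zero_smul R _

lemma phiAux_zero (i : I) (α : Pos M) (h : α.1 = sroot i) :
    phiAux M R a b c d i α = 0 := by
  rw [phiAux, if_pos h]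

lemma phiAux_fixed (i : I) (α : Pos M) (h1 : α.1 ≠ sroot i) (h2 : srefl M i α.1 = α.1) :
    phiAux M R a b c d i α = d • ev M R α := by
  rw [phiAux, if_neg h1, if_pos h2]

lemma phiAux_up (i : I) (α : Pos M) (h1 : α.1 ≠ sroot i) (h2 : srefl M i α.1 ≠ α.1)
    (h3 : IsPos M (srefl M i α.1)) (h4 : dep M α.1 < dep M (srefl M i α.1)) :
    phiAux M R a b c d i α = a • ev M R α + c • ev M R ⟨srefl M i α.1, h3⟩ := by
  rw [phiAux, if_neg h1, if_neg h2, dif_pos h3, if_pos h4]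

lemma phiAux_down (i : I) (α : Pos M) (h1 : α.1 ≠ sroot i) (h2 : srefl M i α.1 ≠ α.1)
    (h3 : IsPos M (srefl M i α.1)) (h4 : ¬ dep M α.1 < dep M (srefl M i α.1)) :
    phiAux M R a b c d i α = b • ev M R ⟨srefl M i α.1, h3⟩ := by
  rw [phiAux, if_neg h1, if_neg h2, dif_pos h3, if_neg h4]

/-- The key vanishing result: an LK-family whose diagonal values vanish is zero. -/
theorem lk_vanish (hs : M.Small) (hsph : Spherical M)
    (hb : IsUnit b) (hc : IsUnit c) (hd : IsUnit d)
    (h : I → (VV M R →ₗ[R] R)) (hlk : IsLK M R a b c d h)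
    (hdiag : ∀ i, h i (ev M R (simplePos M i)) = 0) :
    ∀ (n : ℕ) (α : Pos M) (i : I), dep M α.1 = n → h i (ev M R α) = 0 := by
  intro n
  induction n using Nat.strong_induction_on with
  | _ n ih =>
  intro α i hdep
  have hαpos : IsPos M α.1 := α.2
  rcases Nat.lt_or_ge n 2 with hn2 | hn2
  · -- n = 0 or 1
    have hn0 : 0 < n := hdep ▸ dep_pos M hs hsph hαpos
    have hn1 : n = 1 := by omega
    obtain ⟨j, hj⟩ := simple_of_dep_one M hs hsph hαpos (by omega)
    have hαj : α = simplePos M j := Subtype.ext hj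
    rw [hαj]
    by_cases hij : i = j
    · rw [hij]; exact hdiag j
    · exact hlk.diag i j hij
  · -- n ≥ 2
    have hnot_simple : ∀ k, α.1 ≠ sroot k := by
      intro k hk
      rw [hk, dep_sroot] at hdep
      omega
    -- handling of a descent k' distinct from i
    have handle : ∀ k', k' ≠ i → IsPos M (srefl M k' α.1) →
        dep M (srefl M k' α.1) + 1 = dep M α.1 → h i (ev M R α) = 0 := by
      intro k' hk'i hk'pos hk'dep
      set βv := srefl M k' α.1 with hβv
      have hβP : IsPos M βv := hk'pos
      set βP : Pos M := ⟨βv, hβP⟩ with hβPdef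
      have htk' : bform M α.1 (sroot k') = 1 :=
        descent_bform_one M hs hsph hαpos hk'pos hk'dep (hnot_simple k')
      have hβns : βv ≠ sroot k' := srefl_ne_sroot_self_of_pos M hs hαpos k'
      have hsb : srefl M k' βv = α.1 := srefl_srefl M k' α.1
      have hβna : srefl M k' βv ≠ βv := by
        rw [hsb]
        intro hE
        rw [← hE] at hk'dep
        omega
      have hβup : IsPos M (srefl M k' βv) := by rw [hsb]; exact hαpos
      have hdepβ : dep M βv = n - 1 := by omega
      have hβdepup : dep M βv < dep M (srefl M k' βv) := by
        rw [hsb]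
        omega
      have hphik' : phi M R a b c d k' (ev M R βP) = a • ev M R βP + c • ev M R α := by
        rw [phi_ev, phiAux_up M R a b c d k' βP hβns hβna hβup hβdepup,
          ev_eq M R (α := ⟨srefl M k' (βP.1), hβup⟩) (β := α) hsb]
      have hIHβ : h i (ev M R βP) = 0 := ih (n-1) (by omega) βP i (by show dep M βv = n-1; omega)
      have hine : i ≠ k' := fun hE => hk'i hE.symm
      rcases m_cases M hs hine with hm2 | hm3
      · -- m i k' = 2
        have hrel := LinearMap.congr_fun (hlk.rel2 i k' hm2) (ev M R βP)
        rw [LinearMap.comp_apply, hphik', map_add, map_smul, map_smul,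
          LinearMap.smul_apply, hIHβ] at hrel
        simp only [smul_eq_mul, mul_zero, zero_add] at hrel
        -- hrel : c * h i (ev α) = 0
        exact hc.mul_right_eq_zero.mp hrel
      · -- m i k' = 3
        have hcfk'i : cf M k' i = -1 := cf_three M (by rw [M.symm]; exact hm3)
        have hu : bform M βv (sroot i) = bform M α.1 (sroot i) + 1 := by
          rw [hβv, bform_srefl_left, bform_sroot_sroot, hcfk'i, htk']
          ring
        have hrel := LinearMap.congr_fun (hlk.rel3 i k' hm3) (ev M R βP)
        rw [LinearMap.comp_apply, LinearMap.comp_apply, hphik', map_add, map_smul, map_smul,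
          hIHβ] at hrel
        simp only [smul_eq_mul, mul_zero, zero_add] at hrel
        -- hrel : c * h i (ev α) = h k' (phi i (ev βP))
        have hRHS : h k' (phi M R a b c d i (ev M R βP)) = 0 := by
          -- case on the value of (α|α_i)
          obtain ⟨zi, hzi⟩ := isRoot_bform_sroot_isZ M hs hαpos.1 i
          have hle2 := root_bform_le_two M hs hsph hαpos.1 (IsRoot.simple i)
          have hne2 : bform M α.1 (sroot i) ≠ 2 := fun hE =>
            hnot_simple i (root_bform_eq_two M hs hsph hαpos.1 (IsRoot.simple i) hE)
          have hgen2 := root_bform_ge M hs hsph hαpos.1 (IsRoot.simple i)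
          have hnen2 : bform M α.1 (sroot i) ≠ -2 := by
            intro hE
            have hEE := root_bform_eq_neg_two M hs hsph hαpos.1 (IsRoot.simple i) hE
            have h' := hαpos.2 i
            rw [hEE] at h'
            have : (0:ℝ) ≤ -1 := by simpa [sroot] using h'
            linarith
          have hzicase : zi = -1 ∨ zi = 0 ∨ zi = 1 := by
            rw [hzi] at hle2 hne2 hgen2 hnen2
            have h1 : zi ≤ 2 := by exact_mod_cast hle2
            have h2 : -2 ≤ zi := by exact_mod_cast hgen2
            have h3 : zi ≠ 2 := fun hE => hne2 (by rw [hE]; norm_num)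
            have h4 : zi ≠ -2 := fun hE => hnen2 (by rw [hE]; push_cast; norm_num)
            omega
          rcases hzicase with hz | hz | hz
          · -- (α|α_i) = -1 : β fixed by s_i
            have hu0 : bform M βv (sroot i) = 0 := by rw [hu, hzi, hz]; push_cast; ring
            have hβfix : srefl M i βv = βv := srefl_of_bform_eq_zero M i hu0
            have hβnsi : βv ≠ sroot i := by
              intro hE
              rw [hE, bform_sroot_sroot, cf_self] at hu0
              norm_num at hu0
            rw [phi_ev, phiAux_fixed M R a b c d i βP hβnsi hβfix, map_smul,
              ih (n-1) (by omega) βP k' (by show dep M βv = n-1; omega), smul_zero]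
          · -- (α|α_i) = 0 : s_i moves β down
            have hu1 : bform M βv (sroot i) = 1 := by rw [hu, hzi, hz]; push_cast; ring
            have hβnsi : βv ≠ sroot i := by
              intro hE
              rw [hE, bform_sroot_sroot, cf_self] at hu1
              norm_num at hu1
            have hdrop := dep_drop M hs hsph (dep M βv) βv i hβP rfl hβnsi (by rw [hu1]; norm_num)
            have hβmove : srefl M i βv ≠ βv := srefl_ne_self M (by rw [hu1]; norm_num)
            have hnd : ¬ dep M βv < dep M (srefl M i βv) := by omega
            rw [phi_ev, phiAux_down M R a b c d i βP hβnsi hβmove hdrop.1 hnd, map_smul,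
              ih (dep M (srefl M i βv)) (by omega) ⟨srefl M i βv, hdrop.1⟩ k' rfl, smul_zero]
          · -- (α|α_i) = 1 : β = α_i
            have hu2 : bform M βv (sroot i) = 2 := by rw [hu, hzi, hz]; push_cast; ring
            have hβsi : βv = sroot i :=
              root_bform_eq_two M hs hsph hβP.1 (IsRoot.simple i) hu2
            rw [phi_ev, phiAux_zero M R a b c d i βP hβsi, map_zero]
        rw [hRHS] at hrel
        exact hc.mul_right_eq_zero.mp hrel
    -- main case split
    by_cases hex : ∃ k', k' ≠ i ∧ IsPos M (srefl M k' α.1) ∧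
        dep M (srefl M k' α.1) + 1 = dep M α.1
    · obtain ⟨k', h1, h2, h3⟩ := hex
      exact handle k' h1 h2 h3
    · -- the only descent is i itself
      obtain ⟨k, hkpos, hkdep⟩ := exists_descent M hs hsph hαpos (by omega)
      have hki : k = i := by
        by_contra hne
        exact hex ⟨k, hne, hkpos, hkdep⟩
      subst hki
      have hti : bform M α.1 (sroot k) = 1 :=
        descent_bform_one M hs hsph hαpos hkpos hkdep (hnot_simple k)
      set βv := srefl M k α.1 with hβv
      set βP : Pos M := ⟨βv, hkpos⟩ with hβPdef
      by_cases hex3 : ∃ j, M.m k j = 3 ∧ bform M α.1 (sroot j) = 0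
      · obtain ⟨j, hm3, hBj0⟩ := hex3
        have hfix : srefl M j α.1 = α.1 := srefl_of_bform_eq_zero M j hBj0
        have hrel := LinearMap.congr_fun (hlk.rel3 k j hm3) (ev M R α)
        rw [LinearMap.comp_apply, LinearMap.comp_apply] at hrel
        have hphij : phi M R a b c d j (ev M R α) = d • ev M R α := by
          rw [phi_ev, phiAux_fixed M R a b c d j α (hnot_simple j) hfix]
        have hαmove : srefl M k α.1 ≠ α.1 := srefl_ne_self M (by rw [hti]; norm_num)
        have hnd : ¬ dep M α.1 < dep M βv := by omega
        have hphik : phi M R a b c d k (ev M R α) = b • ev M R βP := by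
          rw [phi_ev, phiAux_down M R a b c d k α (hnot_simple k) hαmove hkpos hnd]
        rw [hphij, hphik, map_smul, map_smul,
          ih (n-1) (by omega) βP j (by show dep M βv = n-1; omega), smul_zero] at hrel
        have hrel' : d * h k (ev M R α) = 0 := by
          rw [← hrel]; simp [smul_eq_mul]
        exact hd.mul_right_eq_zero.mp hrel'
      · -- contradiction via the norm of β
        exfalso
        push_neg at hex3
        have hno : ∀ l, l ≠ k → bform M α.1 (sroot l) ≤ 0 := by
          intro l hl
          by_contra hpos'
          push_neg at hpos'
          have hdrop := dep_drop M hs hsph n α.1 l hαpos hdep (hnot_simple l) hpos'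
          exact hex ⟨l, hl, hdrop.1, hdrop.2⟩
        have hββ : bform M βv βv = 2 := isRoot_norm M hkpos.1
        have hterm : ∀ l, βv l * bform M (sroot l) βv ≤ 0 := by
          intro l
          apply mul_nonpos_of_nonneg_of_nonpos (hkpos.2 l)
          rw [bform_comm, hβv, bform_srefl_left, bform_sroot_sroot, hti, one_mul]
          by_cases hlk : l = k
          · subst hlk
            rw [cf_self]
            have := hno  -- unused
            nlinarith [hti]
          · have hlk' : cf M k l ≤ 0 := cf_nonpos M hs (fun hE => hlk hE.symm)
            rcases m_cases M hs (fun hE => hlk hE.symm) with hm2 | hm3'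
            · rw [cf_two M hm2]
              have := hno l hlk
              linarith
            · rw [cf_three M hm3']
              have hle := hno l hlk
              have hne0 : bform M α.1 (sroot l) ≠ 0 := fun hE => hex3 l hm3' hE
              have hlt : bform M α.1 (sroot l) < 0 := lt_of_le_of_ne hle hne0
              have hint := int_le_of_lt (isRoot_bform_sroot_isZ M hs hαpos.1 l) IsZ.zero hlt
              linarith
        have hsum : bform M βv βv ≤ 0 := by
          rw [bform_expand_left]
          exact Finset.sum_nonpos fun l _ => hterm l
        linarith

lemma IsLK_sub {f f' : I → (VV M R →ₗ[R] R)}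
    (hf : IsLK M R a b c d f) (hf' : IsLK M R a b c d f') :
    IsLK M R a b c d (fun i => f i - f' i) := by
  refine ⟨fun i j hij => ?_, fun i j hij => ?_, fun i j hij => ?_⟩
  · show (f i - f' i) (ev M R (simplePos M j)) = 0
    rw [LinearMap.sub_apply, hf.diag i j hij, hf'.diag i j hij, sub_zero]
  · show (f i - f' i).comp (phi M R a b c d j) = d • (f i - f' i)
    rw [LinearMap.sub_comp, hf.rel2 i j hij, hf'.rel2 i j hij, smul_sub]
  · show (f i - f' i).comp (phi M R a b c d j) = (f j - f' j).comp (phi M R a b c d i)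
    rw [LinearMap.sub_comp, LinearMap.sub_comp, hf.rel3 i j hij, hf'.rel3 i j hij]

end WithRing

lemma trace_smulRight_eq (R : Type) [CommRing R] [Nontrivial R] (V : Type) [AddCommGroup V]
    [Module R V] [Module.Free R V] [Module.Finite R V] (g : V →ₗ[R] R) (x : V) :
    LinearMap.trace R V (g.smulRight x) = g x := by
  have h1 : g.smulRight x = (LinearMap.toSpanSingleton R V x) ∘ₗ g := by
    ext v
    simp [LinearMap.toSpanSingleton_apply]
  rw [h1, LinearMap.trace_comp_comm']
  have h2 : g ∘ₗ (LinearMap.toSpanSingleton R V x) = g x • LinearMap.id := by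
    ext r
    simp [LinearMap.toSpanSingleton_apply, smul_eq_mul, mul_comm]
  rw [h2, map_smul, LinearMap.trace_id, Module.finrank_self]
  simp

end Aux
end LK
open LK in
/-- in the connected spherical case, distinct LK-families give
non-equivalent LK-representations. -/
theorem statement_11 {I : Type} [Fintype I] [DecidableEq I] [Nonempty I] (M : CoxM I)
    (hsmall : M.Small) (hconn : Connected M) (hsph : Spherical M)
    (R : Type) [CommRing R] (b c d : R) (hb : IsUnit b) (hc : IsUnit c) (hd : IsUnit d)
    (a : R) (ha : a = d - b * c * Ring.inverse d)
    (f f' : I → (VV M R →ₗ[R] R)) (hf : IsLK M R a b c d f) (hf' : IsLK M R a b c d f')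
    (hne : f ≠ f')
    (psi psi' : AM M →* Module.End R (VV M R))
    (hpsi : ∀ i : I, psi (gen M i) = psim M R a b c d f i)
    (hpsi' : ∀ i : I, psi' (gen M i) = psim M R a b c d f' i) :
    ¬ ∃ nu : VV M R ≃ₗ[R] VV M R, ∀ (x : AM M) (v : VV M R),
        psi' x v = nu (psi x (nu.symm v)) := by
  rintro ⟨nu, hnu⟩
  rcases subsingleton_or_nontrivial R with hR | hR
  · exact hne (funext fun i => LinearMap.ext fun v => Subsingleton.elim _ _)
  · haveI : Finite (Pos M) := finite_pos M hsmall hsph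
    haveI : Module.Finite R (VV M R) :=
      Module.Finite.equiv (Finsupp.linearEquivFunOnFinite R R (Pos M)).symm
    have htrace : ∀ i, (f i - f' i) (ev M R (simplePos M i)) = 0 := by
      intro i
      have hconj : psi' (gen M i) = (nu.conj) (psi (gen M i)) := by
        apply LinearMap.ext
        intro v
        rw [LinearEquiv.conj_apply_apply]
        exact hnu (gen M i) v
      have htr := congrArg (LinearMap.trace R (VV M R)) hconj
      rw [LinearMap.trace_conj'] at htr
      rw [hpsi i, hpsi' i] at htr
      have hdiff : psim M R a b c d f' i - psim M R a b c d f i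
          = ((f' i) - (f i)).smulRight (ev M R (simplePos M i)) := by
        apply LinearMap.ext
        intro v
        rw [psim, psim]
        simp only [LinearMap.sub_apply, LinearMap.add_apply, LinearMap.smulRight_apply]
        rw [sub_smul]
        abel
      have e2 := LinearMap.map_sub (LinearMap.trace R (VV M R))
        (psim M R a b c d f' i) (psim M R a b c d f i)
      rw [hdiff, htr, sub_self, trace_smulRight_eq] at e2
      rw [LinearMap.sub_apply] at e2 ⊢
      rw [sub_eq_zero] at e2 ⊢
      exact e2.symm
    have hlkdiff := IsLK_sub M R a b c d hf hf'
    have hvanish := lk_vanish M R a b c d hsmall hsph hb hc hd _ hlkdiff htrace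
    apply hne
    funext i
    apply Finsupp.lhom_ext
    intro α r
    have hα := hvanish (dep M α.1) α i rfl
    have hsingle : (Finsupp.single α r : VV M R) = r • ev M R α := by
      rw [ev, Finsupp.smul_single', mul_one]
    rw [hsingle, map_smul, map_smul]
    rw [LinearMap.sub_apply] at hα
    rw [sub_eq_zero.mp hα]
end

section
/- Let Γ be a Coxeter matrix of small type, (𝔟,𝔠,𝔡) ∈ (𝔯^×)³, 𝔞 = 𝔡 − 𝔟𝔠𝔡⁻¹, and 𝔣 ∈ 𝔯. Suppose a family (𝔣_{i,α})_{(i,α)∈I×Φ⁺} of elements of 𝔯 satisfies: (C1) 𝔣_{i,α_i} = 𝔣 for all i ∈ I; (C2) 𝔣_{i,α_j} = 0 for all j ≠ i; (C3) 𝔣_{i,α} = −(𝔞𝔣𝔠⁻¹)(𝔟𝔡⁻¹)^{dep(α)−2} whenever dep(α) ≥ 2 and (α|α_i) > 0; and, for every α ∈ Φ⁺ with dep(α) ≥ 2, every i ∈ I with (α|α_i) ≤ 0, and every j ∈ I with (α|α_j) > 0 (so that β := s_j(α) ∈ Φ⁺ has dep(β) = dep(α)−1): (C4) 𝔣_{i,α}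 = 𝔟𝔡⁻¹·𝔣_{i,β} if m_{i,j} = 2; (C5) 𝔣_{i,α} = 𝔠⁻¹(𝔟𝔣_{j,γ} − 𝔞𝔣_{i,β}) if m_{i,j} = 3 and γ := s_i(β) ∈ Φ⁺ has dep(γ) = dep(β)−1; (C6) 𝔣_{i,α} = 𝔠⁻¹(𝔡𝔣_{j,β} − 𝔞𝔣_{i,β}) if m_{i,j} = 3 and s_i(β) = β; (C7) 𝔣_{i,α} = 𝔟𝔡⁻¹·𝔣_{i,β} + 𝔡𝔠⁻¹·𝔣_{j,β} + (𝔞𝔡𝔣𝔠⁻²)(𝔟𝔡⁻¹)^{dep(α)−3} if m_{i,j} = 3 and dep(s_i(β)) = dep(β)+1. Then the family (f_i)_{i∈I} ∈ (V*)^I defined by f_i(e_α) = 𝔣_{i,α} is an LK-family. -/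
set_option maxRecDepth 4000

namespace LKProof
open LK

variable {I : Type} [Fintype I] [DecidableEq I] {M : CoxM I}

/-! ### Values of the form coefficients -/

lemma cf_self (M : CoxM I) (i : I) : cf M i i = 2 := by
  rw [cf, (M.one_iff i i).mpr rfl]
  norm_num

lemma cf_comm (M : CoxM I) (i j : I) : cf M i j = cf M j i := by rw [cf, cf, M.symm]

lemma cf_two {i j : I} (h : M.m i j = 2) : cf M i j = 0 := by
  rw [cf, h]; norm_num [Real.cos_pi_div_two]

lemma cf_three {i j : I} (h : M.m i j = 3) : cf M i j = -1 := by
  rw [cf, h]; norm_num [Real.cos_pi_div_three]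

lemma small_ne (hs : M.Small) {i j : I} (h : i ≠ j) : M.m i j = 2 ∨ M.m i j = 3 := by
  rcases hs i j with h1 | h2 | h3
  · exact absurd ((M.one_iff i j).mp h1) h
  · exact Or.inl h2
  · exact Or.inr h3

lemma cf_offdiag (hs : M.Small) {i j : I} (h : i ≠ j) : cf M i j = 0 ∨ cf M i j = -1 := by
  rcases small_ne hs h with h2 | h3
  · exact Or.inl (cf_two h2)
  · exact Or.inr (cf_three h3)

lemma cf_nonpos (hs : M.Small) {i j : I} (h : i ≠ j) : cf M i j ≤ 0 := by
  rcases cf_offdiag hs h with h0 | h0 <;> rw [h0] <;> norm_num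

/-! ### Bilinearity of the form -/

lemma bform_add_left (M : CoxM I) (x y z : I → ℝ) :
    bform M (x + y) z = bform M x z + bform M y z := by
  simp only [bform, Pi.add_apply, add_mul, Finset.sum_add_distrib]

lemma bform_smul_left (M : CoxM I) (r : ℝ) (x z : I → ℝ) :
    bform M (r • x) z = r * bform M x z := by
  simp only [bform, Pi.smul_apply, smul_eq_mul, Finset.mul_sum, mul_assoc]

lemma bform_neg_left (M : CoxM I) (x z : I → ℝ) : bform M (-x) z = -bform M x z := by
  have := bform_smul_left M (-1) x z
  simpa using this

lemma bform_sub_left (M : CoxM I) (x y z : I → ℝ) :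
    bform M (x - y) z = bform M x z - bform M y z := by
  rw [sub_eq_add_neg, bform_add_left, bform_neg_left, sub_eq_add_neg]

lemma bform_symm (M : CoxM I) (x y : I → ℝ) : bform M x y = bform M y x := by
  rw [bform, bform, Finset.sum_comm]
  apply Finset.sum_congr rfl; intro j _
  apply Finset.sum_congr rfl; intro i _
  rw [cf_comm M j i]; ring

lemma bform_add_right (M : CoxM I) (x y z : I → ℝ) :
    bform M z (x + y) = bform M z x + bform M z y := by
  rw [bform_symm, bform_add_left, bform_symm M x z, bform_symm M y z]

lemma bform_smul_right (M : CoxM I) (r : ℝ) (x z : I → ℝ) :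
    bform M z (r • x) = r * bform M z x := by
  rw [bform_symm, bform_smul_left, bform_symm M x z]

lemma bform_sub_right (M : CoxM I) (x y z : I → ℝ) :
    bform M z (x - y) = bform M z x - bform M z y := by
  rw [bform_symm, bform_sub_left, bform_symm M x z, bform_symm M y z]

lemma bform_sroot_right (M : CoxM I) (v : I → ℝ) (i : I) :
    bform M v (sroot i) = ∑ m, v m * cf M m i := by
  rw [bform]
  apply Finset.sum_congr rfl; intro m _
  rw [Finset.sum_eq_single i]
  · simp [sroot]
  · intro j _ hj; simp [sroot, Pi.single_apply, hj]
  · intro h; exact absurd (Finset.mem_univ i) h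

lemma bform_sroot_sroot (M : CoxM I) (i j : I) : bform M (sroot i) (sroot j) = cf M i j := by
  rw [bform_sroot_right, Finset.sum_eq_single i]
  · simp [sroot]
  · intro m _ hm; simp [sroot, Pi.single_apply, hm]
  · intro h; exact absurd (Finset.mem_univ i) h

lemma sroot_self (i : I) : sroot i i = (1 : ℝ) := by simp [sroot]

lemma sroot_ne {i m : I} (h : m ≠ i) : sroot i m = (0 : ℝ) := by
  simp [sroot, Pi.single_apply, h]

lemma sroot_nonneg (i m : I) : (0:ℝ) ≤ sroot i m := by
  rcases eq_or_ne m i with rfl | h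
  · rw [sroot_self]; norm_num
  · rw [sroot_ne h]

lemma bform_sroot_self (M : CoxM I) (i : I) : bform M (sroot i) (sroot i) = 2 := by
  rw [bform_sroot_sroot, cf_self]

/-! ### The simple reflections -/

lemma srefl_def (M : CoxM I) (i : I) (v : I → ℝ) :
    srefl M i v = v - bform M v (sroot i) • sroot i := rfl

lemma srefl_apply (M : CoxM I) (i : I) (v : I → ℝ) (m : I) :
    srefl M i v m = v m - bform M v (sroot i) * sroot i m := rfl

lemma srefl_apply_ne (M : CoxM I) (i : I) (v : I → ℝ) {m : I} (h : m ≠ i) :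
    srefl M i v m = v m := by
  rw [srefl_apply, sroot_ne h, mul_zero, sub_zero]

lemma srefl_apply_self (M : CoxM I) (i : I) (v : I → ℝ) :
    srefl M i v i = v i - bform M v (sroot i) := by
  rw [srefl_apply, sroot_self, mul_one]

lemma bform_srefl_left (M : CoxM I) (i : I) (v : I → ℝ) (x : I) :
    bform M (srefl M i v) (sroot x) =
      bform M v (sroot x) - bform M v (sroot i) * cf M i x := by
  rw [srefl_def, bform_sub_left, bform_smul_left, bform_sroot_sroot]

lemma bform_srefl_self (M : CoxM I) (i : I) (v : I → ℝ) :
    bform M (srefl M i v) (sroot i) = -bform M v (sroot i) := by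
  rw [bform_srefl_left, cf_self]; ring

lemma srefl_of_bform_zero {i : I} {v : I → ℝ} (h : bform M v (sroot i) = 0) :
    srefl M i v = v := by
  rw [srefl_def, h, zero_smul, sub_zero]

lemma bform_zero_of_srefl_eq {i : I} {v : I → ℝ} (h : srefl M i v = v) :
    bform M v (sroot i) = 0 := by
  have := congrFun h i
  rw [srefl_apply_self] at this
  linarith

lemma srefl_srefl (M : CoxM I) (i : I) (v : I → ℝ) : srefl M i (srefl M i v) = v := by
  rw [srefl_def M i (srefl M i v), bform_srefl_self, srefl_def]
  ext m
  simp only [Pi.sub_apply, Pi.smul_apply, smul_eq_mul]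
  ring

lemma bform_srefl_srefl (M : CoxM I) (i : I) (u v : I → ℝ) :
    bform M (srefl M i u) (srefl M i v) = bform M u v := by
  rw [srefl_def M i v, bform_sub_right, bform_smul_right, srefl_def M i u,
    bform_sub_left, bform_sub_left, bform_smul_left, bform_smul_left,
    bform_sroot_self, bform_symm M (sroot i) v]
  ring

lemma srefl_add (M : CoxM I) (i : I) (x y : I → ℝ) :
    srefl M i (x + y) = srefl M i x + srefl M i y := by
  simp only [srefl_def, bform_add_left]
  ext m
  simp only [Pi.sub_apply, Pi.add_apply, Pi.smul_apply, smul_eq_mul]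
  ring

lemma srefl_neg (M : CoxM I) (i : I) (x : I → ℝ) : srefl M i (-x) = -srefl M i x := by
  simp only [srefl_def, bform_neg_left]
  ext m
  simp only [Pi.sub_apply, Pi.neg_apply, Pi.smul_apply, smul_eq_mul]
  ring

/-! ### Roots -/

lemma isRoot_srefl_iff (M : CoxM I) (i : I) (v : I → ℝ) :
    IsRoot M (srefl M i v) ↔ IsRoot M v := by
  constructor
  · intro h
    have := IsRoot.srefl i _ h
    rwa [srefl_srefl] at this
  · exact IsRoot.srefl i v

lemma isRoot_norm {v : I → ℝ} (h : IsRoot M v) : bform M v v = 2 := by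
  induction h with
  | simple i => exact bform_sroot_self M i
  | srefl i v _ ih => rw [bform_srefl_srefl]; exact ih

lemma sroot_ne_zero (i : I) : sroot i ≠ (0 : I → ℝ) := by
  intro h
  have := congrFun h i
  rw [sroot_self] at this
  norm_num at this

end LKProof
namespace LKProof
open LK

set_option linter.unusedSectionVars false
set_option linter.unusedVariables false

variable {I : Type} [Fintype I] [DecidableEq I] {M : CoxM I}

/-! ### Words acting on `E` -/

/-- Action of a word on `E`. -/
noncomputable def act (M : CoxM I) (l : List I) (v : I → ℝ) : I → ℝ := l.foldr (srefl M) v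

@[simp] lemma act_nil (M : CoxM I) (v : I → ℝ) : act M [] v = v := rfl

@[simp] lemma act_cons (M : CoxM I) (x : I) (l : List I) (v : I → ℝ) :
    act M (x :: l) v = srefl M x (act M l v) := rfl

lemma act_append (M : CoxM I) (l l' : List I) (v : I → ℝ) :
    act M (l ++ l') v = act M l (act M l' v) := by
  induction l with
  | nil => rfl
  | cons x xs ih => simp [ih]

lemma act_reverse_act (M : CoxM I) (l : List I) (v : I → ℝ) :
    act M l.reverse (act M l v) = v := by
  induction l generalizing v with
  | nil => rfl
  | cons x xs ih =>
    rw [List.reverse_cons, act_cons, act_append]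
    simp only [act_cons, act_nil]
    rw [srefl_srefl, ih]

lemma act_act_reverse (M : CoxM I) (l : List I) (v : I → ℝ) :
    act M l (act M l.reverse v) = v := by
  have := act_reverse_act M l.reverse v
  rwa [List.reverse_reverse] at this

lemma act_add (M : CoxM I) (l : List I) (x y : I → ℝ) :
    act M l (x + y) = act M l x + act M l y := by
  induction l with
  | nil => rfl
  | cons a as ih => simp [ih, srefl_add]

lemma act_neg (M : CoxM I) (l : List I) (x : I → ℝ) : act M l (-x) = -act M l x := by
  induction l with
  | nil => rfl
  | cons a as ih => simp [ih, srefl_neg]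

lemma isRoot_act {v : I → ℝ} (h : IsRoot M v) (l : List I) : IsRoot M (act M l v) := by
  induction l with
  | nil => exact h
  | cons a as ih => exact IsRoot.srefl a _ ih

lemma isRoot_rep {v : I → ℝ} (h : IsRoot M v) : ∃ l i, v = act M l (sroot i) := by
  induction h with
  | simple i => exact ⟨[], i, rfl⟩
  | srefl i v _ ih =>
    obtain ⟨l, m, rfl⟩ := ih
    exact ⟨i :: l, m, rfl⟩

/-! ### Depth -/

/-- The set of lengths of words sending `v` to a vector with a negative coordinate. -/
def DS (M : CoxM I) (v : I → ℝ) : Set ℕ :=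
  {n | ∃ l : List I, l.length = n ∧ ∃ k, l.foldr (srefl M) v k < 0}

lemma dep_eq_sInf (M : CoxM I) (v : I → ℝ) : dep M v = sInf (DS M v) := rfl

lemma ds_nonempty {v : I → ℝ} (h : IsRoot M v) : (DS M v).Nonempty := by
  obtain ⟨l, i, rfl⟩ := isRoot_rep h
  refine ⟨(i :: l.reverse).length, i :: l.reverse, rfl, i, ?_⟩
  show srefl M i (act M l.reverse (act M l (sroot i))) i < 0
  rw [act_reverse_act]
  rw [srefl_apply_self, bform_sroot_self, sroot_self]
  norm_num

lemma dep_le {v : I → ℝ} {l : List I} {k : I} (hk : act M l v k < 0) :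
    dep M v ≤ l.length :=
  Nat.sInf_le ⟨l, rfl, k, hk⟩

lemma dep_witness {v : I → ℝ} (h : IsRoot M v) :
    ∃ l : List I, l.length = dep M v ∧ ∃ k, act M l v k < 0 :=
  Nat.sInf_mem (ds_nonempty h)

lemma dep_pos {v : I → ℝ} (h : IsPos M v) : 1 ≤ dep M v := by
  by_contra hlt
  push_neg at hlt
  interval_cases hd : dep M v
  have h0 : (0 : ℕ) ∈ DS M v := by
    rw [← hd]; exact Nat.sInf_mem (ds_nonempty h.1)
  obtain ⟨l, hl, k, hk⟩ := h0
  rw [List.length_eq_zero_iff] at hl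
  subst hl
  exact absurd hk (not_lt.mpr (h.2 k))

lemma dep_sroot (M : CoxM I) (i : I) : dep M (sroot i) = 1 := by
  have h1 : dep M (sroot i) ≤ 1 := by
    refine dep_le (l := [i]) (k := i) ?_
    show srefl M i (sroot i) i < 0
    rw [srefl_apply_self, bform_sroot_self, sroot_self]; norm_num
  exact le_antisymm h1 (dep_pos (isPos_sroot M i))

/-- One reflection changes the depth by at most one (stated as an upper bound). -/
lemma dep_srefl_le {v : I → ℝ} (hv : IsRoot M v) (x : I) :
    dep M (srefl M x v) ≤ dep M v + 1 := by
  obtain ⟨l, hl, k, hk⟩ := dep_witness hv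
  have : act M (l ++ [x]) (srefl M x v) k < 0 := by
    rw [act_append]
    simpa [srefl_srefl] using hk
  have h2 := dep_le this
  simpa [hl] using h2

lemma dep_le_srefl {v : I → ℝ} (hv : IsRoot M v) (x : I) :
    dep M v ≤ dep M (srefl M x v) + 1 := by
  have h := dep_srefl_le (M := M) ((isRoot_srefl_iff M x v).mpr hv) x
  rwa [srefl_srefl] at h

end LKProof
namespace LKProof
open LK

variable {I : Type} [Fintype I] [DecidableEq I] {M : CoxM I}

/-! ### Word length of a transformation -/

/-- Transformations of `E` represented by a word. -/
def Rep (M : CoxM I) (f : (I → ℝ) → (I → ℝ)) : Prop := ∃ l : List I, act M l = f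

/-- The set of lengths of words representing `f`. -/
def WS (M : CoxM I) (f : (I → ℝ) → (I → ℝ)) : Set ℕ :=
  {n | ∃ l : List I, l.length = n ∧ act M l = f}

/-- Minimal length of a word representing `f`. -/
noncomputable def wlen (M : CoxM I) (f : (I → ℝ) → (I → ℝ)) : ℕ := sInf (WS M f)

lemma rep_act (M : CoxM I) (l : List I) : Rep M (act M l) := ⟨l, rfl⟩

lemma wlen_le {f : (I → ℝ) → (I → ℝ)} {l : List I} (h : act M l = f) :
    wlen M f ≤ l.length :=
  Nat.sInf_le ⟨l, rfl, h⟩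

lemma rep_min {f : (I → ℝ) → (I → ℝ)} (h : Rep M f) :
    ∃ l : List I, act M l = f ∧ l.length = wlen M f := by
  obtain ⟨l0, hl0⟩ := h
  have : wlen M f ∈ WS M f := Nat.sInf_mem ⟨l0.length, l0, rfl, hl0⟩
  obtain ⟨l, h1, h2⟩ := this
  exact ⟨l, h2, h1⟩

lemma comp_act_eq (M : CoxM I) (u c : List I) : act M u ∘ act M c = act M (u ++ c) := by
  funext v; rw [Function.comp_apply, act_append]

lemma rep_comp {f : (I → ℝ) → (I → ℝ)} (hf : Rep M f) (c : List I) :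
    Rep M (f ∘ act M c) := by
  obtain ⟨u, rfl⟩ := hf
  exact ⟨u ++ c, (comp_act_eq M u c).symm⟩

lemma wlen_comp_le {f : (I → ℝ) → (I → ℝ)} (hf : Rep M f) (c : List I) :
    wlen M (f ∘ act M c) ≤ wlen M f + c.length := by
  obtain ⟨u, hu, hlen⟩ := rep_min hf
  have : act M (u ++ c) = f ∘ act M c := by rw [← comp_act_eq, hu]
  have h2 := wlen_le this
  simpa [hlen] using h2

lemma act_singleton (M : CoxM I) (x : I) : act M [x] = srefl M x := rfl

lemma comp_srefl_srefl (M : CoxM I) (f : (I → ℝ) → (I → ℝ)) (x : I) :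
    (f ∘ srefl M x) ∘ srefl M x = f := by
  funext v; simp [srefl_srefl]

lemma rep_comp_srefl {f : (I → ℝ) → (I → ℝ)} (hf : Rep M f) (x : I) :
    Rep M (f ∘ srefl M x) := by
  rw [← act_singleton]; exact rep_comp hf [x]

lemma wlen_le_comp_srefl {f : (I → ℝ) → (I → ℝ)} (hf : Rep M f) (x : I) :
    wlen M f ≤ wlen M (f ∘ srefl M x) + 1 := by
  have h1 := wlen_comp_le (rep_comp_srefl hf x) [x]
  have h2 : (f ∘ srefl M x) ∘ act M [x] = f := by
    funext v
    show f (srefl M x (srefl M x v)) = f v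
    rw [srefl_srefl]
  rw [h2] at h1
  simpa using h1

lemma rep_apply_add {f : (I → ℝ) → (I → ℝ)} (hf : Rep M f) (x y : I → ℝ) :
    f (x + y) = f x + f y := by
  obtain ⟨l, rfl⟩ := hf; exact act_add M l x y

lemma rep_apply_neg {f : (I → ℝ) → (I → ℝ)} (hf : Rep M f) (x : I → ℝ) :
    f (-x) = -f x := by
  obtain ⟨l, rfl⟩ := hf; exact act_neg M l x

/-! ### Dihedral computations -/

lemma comm_pt {i t : I} (hit : cf M i t = 0) (v : I → ℝ) :
    srefl M i (srefl M t v) = srefl M t (srefl M i v) := by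
  have hti : cf M t i = 0 := by rw [cf_comm]; exact hit
  have e1 : bform M (srefl M t v) (sroot i) = bform M v (sroot i) := by
    rw [bform_srefl_left, hti]; ring
  have e2 : bform M (srefl M i v) (sroot t) = bform M v (sroot t) := by
    rw [bform_srefl_left, hit]; ring
  rw [srefl_def M i (srefl M t v), e1, srefl_def M t v,
      srefl_def M t (srefl M i v), e2, srefl_def M i v]
  ext m
  simp only [Pi.sub_apply, Pi.smul_apply, smul_eq_mul]
  ring

lemma braid_pt {i t : I} (hit : cf M i t = -1) (v : I → ℝ) :
    srefl M i (srefl M t (srefl M i v)) = srefl M t (srefl M i (srefl M t v)) := by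
  have hti : cf M t i = -1 := by rw [cf_comm]; exact hit
  set A := bform M v (sroot i) with hA
  set B := bform M v (sroot t) with hB
  have e1 : bform M (srefl M i v) (sroot t) = B + A := by
    rw [bform_srefl_left, hit, ← hA, ← hB]; ring
  have e2 : bform M (srefl M t (srefl M i v)) (sroot i) = B := by
    rw [bform_srefl_left, bform_srefl_self, e1, hti, ← hA]; ring
  have f1 : bform M (srefl M t v) (sroot i) = A + B := by
    rw [bform_srefl_left, hti, ← hA, ← hB]; ring
  have f2 : bform M (srefl M i (srefl M t v)) (sroot t) = A := by
    rw [bform_srefl_left, bform_srefl_self, f1, hit, ← hB]; ring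
  rw [srefl_def M i (srefl M t (srefl M i v)), e2,
      srefl_def M t (srefl M i v), e1, srefl_def M i v,
      srefl_def M t (srefl M i (srefl M t v)), f2,
      srefl_def M i (srefl M t v), f1, srefl_def M t v]
  ext m
  simp only [Pi.sub_apply, Pi.smul_apply, smul_eq_mul]
  ring

/-- Canonical forms in the commuting (m = 2) case. -/
lemma canon2 {i t : I} (hit : cf M i t = 0) :
    ∀ c : List I, (∀ x ∈ c, x = i ∨ x = t) →
      ∃ c' : List I, c' ∈ [([] : List I), [i], [t], [i, t]] ∧
        act M c' = act M c ∧ c'.length ≤ c.length := by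
  intro c hc
  induction c with
  | nil => exact ⟨[], by simp, rfl, le_refl _⟩
  | cons x xs ih =>
    obtain ⟨c'', hmem, hact, hlen⟩ := ih (fun y hy => hc y (List.mem_cons_of_mem x hy))
    have hx := hc x (List.mem_cons_self (a := x) (l := xs))
    have key : ∀ v, act M (x :: xs) v = srefl M x (act M c'' v) := by
      intro v; rw [act_cons, hact]
    have hlen1 : c''.length + 1 ≤ xs.length + 1 := Nat.succ_le_succ hlen
    have hlen2 : c''.length ≤ xs.length + 1 := hlen.trans (Nat.le_succ _)
    fin_cases hmem
    · -- c'' = []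
      rcases hx with h | h <;> subst h <;>
        exact ⟨[x], by simp, by funext v; rw [key v]; rfl, by simpa using hlen1⟩
    · -- c'' = [i]
      rcases hx with h | h <;> subst h
      · refine ⟨[], by simp, ?_, by simpa using Nat.zero_le _⟩
        funext v; rw [key v]
        show v = srefl M x (srefl M x v)
        rw [srefl_srefl]
      · refine ⟨[i, x], by simp, ?_, by simpa using hlen1⟩
        funext v; rw [key v]
        show srefl M i (srefl M x v) = srefl M x (srefl M i v)
        exact comm_pt hit v
    · -- c'' = [t]
      rcases hx with h | h <;> subst h
      · exact ⟨[x, t], by simp, by funext v; rw [key v]; rfl, by simpa using hlen1⟩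
      · refine ⟨[], by simp, ?_, by simpa using Nat.zero_le _⟩
        funext v; rw [key v]
        show v = srefl M x (srefl M x v)
        rw [srefl_srefl]
    · -- c'' = [i, t]
      rcases hx with h | h <;> subst h
      · refine ⟨[t], by simp, ?_, by simpa using hlen2⟩
        funext v; rw [key v]
        show srefl M t v = srefl M x (srefl M x (srefl M t v))
        rw [srefl_srefl]
      · refine ⟨[i], by simp, ?_, by simpa using hlen2⟩
        funext v; rw [key v]
        show srefl M i v = srefl M x (srefl M i (srefl M x v))
        rw [← comm_pt hit (srefl M x v), srefl_srefl]

/-- Canonical forms in the braid (m = 3) case. -/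
lemma canon3 {i t : I} (hit : cf M i t = -1) :
    ∀ c : List I, (∀ x ∈ c, x = i ∨ x = t) →
      ∃ c' : List I, c' ∈ [([] : List I), [i], [t], [i, t], [t, i], [i, t, i]] ∧
        act M c' = act M c ∧ c'.length ≤ c.length := by
  intro c hc
  induction c with
  | nil => exact ⟨[], by simp, rfl, le_refl _⟩
  | cons x xs ih =>
    obtain ⟨c'', hmem, hact, hlen⟩ := ih (fun y hy => hc y (List.mem_cons_of_mem x hy))
    have hx := hc x (List.mem_cons_self (a := x) (l := xs))
    have key : ∀ v, act M (x :: xs) v = srefl M x (act M c'' v) := by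
      intro v; rw [act_cons, hact]
    have hlen1 : c''.length + 1 ≤ xs.length + 1 := Nat.succ_le_succ hlen
    have hlen2 : c''.length ≤ xs.length + 1 := hlen.trans (Nat.le_succ _)
    fin_cases hmem
    · -- c'' = []
      rcases hx with h | h <;> subst h <;>
        exact ⟨[x], by simp, by funext v; rw [key v]; rfl, by simpa using hlen1⟩
    · -- c'' = [i]
      rcases hx with h | h <;> subst h
      · refine ⟨[], by simp, ?_, by simpa using Nat.zero_le _⟩
        funext v; rw [key v]
        show v = srefl M x (srefl M x v)
        rw [srefl_srefl]
      · exact ⟨[x, i], by simp, by funext v; rw [key v]; rfl, by simpa using hlen1⟩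
    · -- c'' = [t]
      rcases hx with h | h <;> subst h
      · exact ⟨[x, t], by simp, by funext v; rw [key v]; rfl, by simpa using hlen1⟩
      · refine ⟨[], by simp, ?_, by simpa using Nat.zero_le _⟩
        funext v; rw [key v]
        show v = srefl M x (srefl M x v)
        rw [srefl_srefl]
    · -- c'' = [i, t]
      rcases hx with h | h <;> subst h
      · refine ⟨[t], by simp, ?_, by simpa using hlen2⟩
        funext v; rw [key v]
        show srefl M t v = srefl M x (srefl M x (srefl M t v))
        rw [srefl_srefl]
      · refine ⟨[i, x, i], by simp, ?_, by simpa using hlen1⟩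
        funext v; rw [key v]
        show srefl M i (srefl M x (srefl M i v)) = srefl M x (srefl M i (srefl M x v))
        exact braid_pt hit v
    · -- c'' = [t, i]
      rcases hx with h | h <;> subst h
      · exact ⟨[x, t, x], by simp, by funext v; rw [key v]; rfl, by simpa using hlen1⟩
      · refine ⟨[i], by simp, ?_, by simpa using hlen2⟩
        funext v; rw [key v]
        show srefl M i v = srefl M x (srefl M x (srefl M i v))
        rw [srefl_srefl]
    · -- c'' = [i, t, i]
      rcases hx with h | h <;> subst h
      · refine ⟨[t, x], by simp, ?_, by have h3 := hlen; simp at h3; simp; omega⟩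
        funext v; rw [key v]
        show srefl M t (srefl M x v) = srefl M x (srefl M x (srefl M t (srefl M x v)))
        rw [srefl_srefl]
      · refine ⟨[i, x], by simp, ?_, by have h3 := hlen; simp at h3; simp; omega⟩
        funext v; rw [key v]
        show srefl M i (srefl M x v) = srefl M x (srefl M i (srefl M x (srefl M i v)))
        rw [← braid_pt hit (srefl M i v), srefl_srefl]

end LKProof
namespace LKProof
open LK

variable {I : Type} [Fintype I] [DecidableEq I] {M : CoxM I}

/-- The descent process towards a `{i,t}`-minimal coset representative. -/
lemma descend (i t : I) : ∀ n : ℕ, ∀ f : (I → ℝ) → (I → ℝ), Rep M f → wlen M f = n →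
    ∃ (h : (I → ℝ) → (I → ℝ)) (c : List I), Rep M h ∧ (∀ x ∈ c, x = i ∨ x = t) ∧
      f = h ∘ act M c ∧ wlen M h + c.length ≤ n ∧
      wlen M h ≤ wlen M (h ∘ srefl M i) ∧ wlen M h ≤ wlen M (h ∘ srefl M t) := by
  intro n
  induction n using Nat.strong_induction_on with
  | _ n IH =>
    intro f hf hlen
    by_cases hi : wlen M (f ∘ srefl M i) < n
    · obtain ⟨h, c, hrep, hmem, heq, hwl, ha1, ha2⟩ :=
        IH _ hi (f ∘ srefl M i) (rep_comp_srefl hf i) rfl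
      refine ⟨h, c ++ [i], hrep, ?_, ?_, ?_, ha1, ha2⟩
      · intro x hx
        rcases List.mem_append.mp hx with hx' | hx'
        · exact hmem x hx'
        · simp at hx'; exact Or.inl hx'
      · funext v
        have h2 := congrFun heq (srefl M i v)
        simp only [Function.comp_apply] at h2
        show f v = h (act M (c ++ [i]) v)
        rw [act_append]
        show f v = h (act M c (srefl M i v))
        rw [← h2, srefl_srefl]
      · have hstep : n ≤ wlen M (f ∘ srefl M i) + 1 := by
          rw [← hlen]; exact wlen_le_comp_srefl hf i
        simp only [List.length_append, List.length_cons, List.length_nil]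
        omega
    · by_cases ht : wlen M (f ∘ srefl M t) < n
      · obtain ⟨h, c, hrep, hmem, heq, hwl, ha1, ha2⟩ :=
          IH _ ht (f ∘ srefl M t) (rep_comp_srefl hf t) rfl
        refine ⟨h, c ++ [t], hrep, ?_, ?_, ?_, ha1, ha2⟩
        · intro x hx
          rcases List.mem_append.mp hx with hx' | hx'
          · exact hmem x hx'
          · simp at hx'; exact Or.inr hx'
        · funext v
          have h2 := congrFun heq (srefl M t v)
          simp only [Function.comp_apply] at h2
          show f v = h (act M (c ++ [t]) v)
          rw [act_append]
          show f v = h (act M c (srefl M t v))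
          rw [← h2, srefl_srefl]
        · have hstep : n ≤ wlen M (f ∘ srefl M t) + 1 := by
            rw [← hlen]; exact wlen_le_comp_srefl hf t
          simp only [List.length_append, List.length_cons, List.length_nil]
          omega
      · refine ⟨f, [], hf, by simp, ?_, by simpa using hlen.le, ?_, ?_⟩
        · funext v; rfl
        · rw [hlen]; omega
        · rw [hlen]; omega

/-- Humphreys' Theorem 5.4: if multiplying by `s_i` on the right does not decrease the
length, then the image of `α_i` is nonnegative. -/
theorem T54 (hs : M.Small) : ∀ n : ℕ, ∀ f : (I → ℝ) → (I → ℝ), Rep M f → wlen M f = n →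
    ∀ i : I, wlen M f ≤ wlen M (f ∘ srefl M i) → ∀ m, 0 ≤ f (sroot i) m := by
  intro n
  induction n using Nat.strong_induction_on with
  | _ n IH =>
    intro f hf hlen i hasc m
    obtain ⟨l, hl, hllen⟩ := rep_min hf
    rcases l.eq_nil_or_concat with rfl | ⟨L, t, rfl⟩
    · -- f = id
      subst hl
      exact sroot_nonneg i m
    · rw [List.concat_eq_append] at hl hllen
      have hn : n = L.length + 1 := by
        rw [← hlen, ← hllen]; simp
    -- f ∘ s_t = act M L
      have hft : f ∘ srefl M t = act M L := by
        funext v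
        rw [Function.comp_apply, ← hl, act_append]
        show act M L (act M [t] (srefl M t v)) = act M L v
        have : act M [t] (srefl M t v) = v := by
          show srefl M t (srefl M t v) = v
          rw [srefl_srefl]
        rw [this]
      have hwt : wlen M (f ∘ srefl M t) < n := by
        rw [hft]
        calc wlen M (act M L) ≤ L.length := wlen_le rfl
        _ < n := by omega
      have hti : t ≠ i := by
        rintro rfl
        rw [hlen] at hasc
        omega
      -- descend
      obtain ⟨h, c, hrep, hmem, heq, hwl, hai, hat⟩ := descend i t n f hf hlen
      have hcne : c ≠ [] := by
        rintro rfl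
        have : f = h := by rw [heq]; funext v; rfl
        rw [← this] at hat
        omega
      have hclen : 1 ≤ c.length := by
        cases c with
        | nil => exact absurd rfl hcne
        | cons y ys => simp
      have hwh : wlen M h < n := by omega
      have hhi : ∀ m, 0 ≤ h (sroot i) m := IH _ hwh h hrep rfl i hai
      have hht : ∀ m, 0 ≤ h (sroot t) m := IH _ hwh h hrep rfl t hat
      have hadd := rep_apply_add hrep
      -- the two dihedral cases
      have hit' : i ≠ t := fun hh => hti hh.symm
      have main : ∀ c' : List I, act M c' = act M c → c'.length ≤ c.length →
          (f (sroot i) = h (act M c' (sroot i))) := by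
        intro c' hc' hcl
        rw [heq]
        simp only [Function.comp_apply]
        rw [← congrFun hc' (sroot i)]
      -- contradiction helper for descending canonical forms
      have contra : ∀ c'' : List I, (f ∘ srefl M i) = h ∘ act M c'' →
          c''.length + 1 + wlen M h ≤ n → False := by
        intro c'' hc'' hle
        have h1 : wlen M (f ∘ srefl M i) ≤ wlen M h + c''.length := by
          rw [hc'']; exact wlen_comp_le hrep c''
        have h2 : n ≤ wlen M (f ∘ srefl M i) := hlen ▸ hasc
        omega
      rcases small_ne hs hit' with m2 | m3
      · -- commuting case
        obtain ⟨c', hcmem, hact', hclen'⟩ := canon2 (cf_two m2) c hmem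
        have hfi := main c' hact' hclen'
        fin_cases hcmem
        · rw [hfi]; exact hhi m
        · -- c' = [i] : descent, contradiction
          exfalso
          refine contra [] ?_ ?_
          · funext v
            rw [heq]
            simp only [Function.comp_apply]
            rw [← congrFun hact' (srefl M i v)]
            show h (srefl M i (srefl M i v)) = h (act M [] v)
            rw [srefl_srefl]; rfl
          · have h5 := hclen'
            simp only [List.length_cons, List.length_nil] at h5 ⊢
            omega
        · -- c' = [t]
          rw [hfi]
          show 0 ≤ h (srefl M t (sroot i)) m
          have : srefl M t (sroot i) = sroot i := by
            apply srefl_of_bform_zero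
            rw [bform_sroot_sroot]
            exact cf_two m2
          rw [this]; exact hhi m
        · -- c' = [i, t] : s_i s_t with s_i s_t s_i = s_t : descent
          exfalso
          refine contra [t] ?_ ?_
          · funext v
            rw [heq]
            simp only [Function.comp_apply]
            rw [← congrFun hact' (srefl M i v)]
            show h (srefl M i (srefl M t (srefl M i v))) = h (act M [t] v)
            rw [comm_pt (cf_two m2) (srefl M i v), srefl_srefl]
            rfl
          · have h5 := hclen'
            simp only [List.length_cons, List.length_nil] at h5 ⊢
            omega
      · -- braid case
        have hcf : cf M i t = -1 := cf_three m3
        obtain ⟨c', hcmem, hact', hclen'⟩ := canon3 hcf c hmem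
        have hfi := main c' hact' hclen'
        fin_cases hcmem
        · rw [hfi]; exact hhi m
        · -- c' = [i] : descent
          exfalso
          refine contra [] ?_ ?_
          · funext v
            rw [heq]
            simp only [Function.comp_apply]
            rw [← congrFun hact' (srefl M i v)]
            show h (srefl M i (srefl M i v)) = h (act M [] v)
            rw [srefl_srefl]; rfl
          · have h5 := hclen'
            simp only [List.length_cons, List.length_nil] at h5 ⊢
            omega
        · -- c' = [t] : s_t α_i = α_i + α_t
          rw [hfi]
          show 0 ≤ h (srefl M t (sroot i)) m
          have hrefl : srefl M t (sroot i) = sroot i + sroot t := by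
            rw [srefl_def, bform_sroot_sroot, hcf]
            ext mm
            simp only [Pi.sub_apply, Pi.smul_apply, Pi.add_apply, smul_eq_mul]
            ring
          rw [hrefl, hadd]
          have := hhi m
          have := hht m
          simp only [Pi.add_apply]
          linarith
        · -- c' = [i, t] : act c' (α_i) = s_i (s_t α_i) = s_i(α_i + α_t) = α_t
          rw [hfi]
          have hrefl : srefl M t (sroot i) = sroot i + sroot t := by
            rw [srefl_def, bform_sroot_sroot, hcf]
            ext mm
            simp only [Pi.sub_apply, Pi.smul_apply, Pi.add_apply, smul_eq_mul]
            ring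
          have hval : act M [i, t] (sroot i) = sroot t := by
            show srefl M i (srefl M t (sroot i)) = sroot t
            have hcf2 : cf M t i = -1 := by rw [cf_comm]; exact hcf
            rw [hrefl, srefl_def, bform_add_left, bform_sroot_sroot, bform_sroot_sroot,
              cf_self, hcf2]
            ext mm
            simp only [Pi.sub_apply, Pi.add_apply, Pi.smul_apply, smul_eq_mul]
            ring
          rw [hval]
          exact hht m
        · -- c' = [t, i] : descent (s_t s_i s_i = s_t)
          exfalso
          refine contra [t] ?_ ?_
          · funext v
            rw [heq]
            simp only [Function.comp_apply]
            rw [← congrFun hact' (srefl M i v)]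
            show h (srefl M t (srefl M i (srefl M i v))) = h (act M [t] v)
            rw [srefl_srefl]; rfl
          · have h5 := hclen'
            simp only [List.length_cons, List.length_nil] at h5 ⊢
            omega
        · -- c' = [i, t, i] : descent (s_i s_t s_i s_i = s_i s_t)
          exfalso
          refine contra [i, t] ?_ ?_
          · funext v
            rw [heq]
            simp only [Function.comp_apply]
            rw [← congrFun hact' (srefl M i v)]
            show h (srefl M i (srefl M t (srefl M i (srefl M i v)))) = h (act M [i, t] v)
            rw [srefl_srefl]; rfl
          · have h5 := hclen'
            simp only [List.length_cons, List.length_nil] at h5 ⊢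
            omega

/-- Every root is nonnegative or nonpositive. -/
theorem root_pm (hs : M.Small) {v : I → ℝ} (hv : IsRoot M v) :
    (∀ m, 0 ≤ v m) ∨ (∀ m, v m ≤ 0) := by
  obtain ⟨l, i, rfl⟩ := isRoot_rep hv
  set f := act M l with hf
  have hrep : Rep M f := ⟨l, rfl⟩
  by_cases hc : wlen M f ≤ wlen M (f ∘ srefl M i)
  · exact Or.inl (T54 hs (wlen M f) f hrep rfl i hc)
  · right
    push_neg at hc
    set g := f ∘ srefl M i with hg
    have hrepg : Rep M g := rep_comp_srefl hrep i
    have hgi : wlen M g ≤ wlen M (g ∘ srefl M i) := by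
      have : g ∘ srefl M i = f := comp_srefl_srefl M f i
      rw [this]
      exact hc.le
    have hpos := T54 hs (wlen M g) g hrepg rfl i hgi
    intro m
    have h1 := hpos m
    have h2 : g (sroot i) = -f (sroot i) := by
      rw [hg]
      show f (srefl M i (sroot i)) = -f (sroot i)
      have : srefl M i (sroot i) = -sroot i := by
        rw [srefl_def, bform_sroot_self]
        ext mm
        simp only [Pi.sub_apply, Pi.smul_apply, Pi.neg_apply, smul_eq_mul]
        ring
      rw [this, rep_apply_neg hrep]
    rw [h2] at h1
    simp only [Pi.neg_apply] at h1
    linarith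

end LKProof
namespace LKProof
open LK

set_option linter.unusedSectionVars false

variable {I : Type} [Fintype I] [DecidableEq I] {M : CoxM I}

/-- A positive root which has some strictly positive coordinate off `k` stays positive
under `s_k`; otherwise it is `α_k`. -/
lemma refl_pos (hs : M.Small) {v : I → ℝ} (hv : IsPos M v) {i : I} (hne : v ≠ sroot i) :
    IsPos M (srefl M i v) := by
  have hroot : IsRoot M (srefl M i v) := IsRoot.srefl i v hv.1
  refine ⟨hroot, ?_⟩
  rcases root_pm hs hroot with hpos | hneg
  · exact hpos
  · exfalso
    apply hne
    have hzero : ∀ m, m ≠ i → v m = 0 := by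
      intro m hm
      have h1 := hneg m
      rw [srefl_apply_ne M i v hm] at h1
      exact le_antisymm h1 (hv.2 m)
    have hvk : v = v i • sroot i := by
      ext m
      rcases eq_or_ne m i with rfl | hm
      · simp [sroot_self]
      · rw [hzero m hm]; simp [sroot_ne hm]
    have hnorm := isRoot_norm hv.1
    rw [hvk, bform_smul_left, bform_smul_right, bform_sroot_self] at hnorm
    have hvi : v i = 1 := by nlinarith [hv.2 i]
    rw [hvk, hvi, one_smul]

lemma crit_simple (hs : M.Small) {v : I → ℝ} (hv : IsPos M v) {k : I}
    (hk : srefl M k v k < 0) : v = sroot k := by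
  by_contra hne
  have := (refl_pos hs hv hne).2 k
  linarith

lemma dep_one_simple (hs : M.Small) {v : I → ℝ} (hv : IsPos M v) (h1 : dep M v = 1) :
    ∃ k, v = sroot k := by
  obtain ⟨l, hl, m, hm⟩ := dep_witness hv.1
  rw [h1] at hl
  obtain ⟨k, rfl⟩ := List.length_eq_one_iff.mp hl
  have hm' : srefl M k v m < 0 := hm
  rcases eq_or_ne m k with rfl | hne
  · exact ⟨_, crit_simple hs hv hm'⟩
  · rw [srefl_apply_ne M k v hne] at hm'
    exact absurd hm' (not_lt.mpr (hv.2 m))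

lemma dep_ge_two (hs : M.Small) {v : I → ℝ} (hv : IsPos M v) (h : ∀ k, v ≠ sroot k) :
    2 ≤ dep M v := by
  have h1 := dep_pos hv
  rcases Nat.lt_or_ge (dep M v) 2 with h2 | h2
  · exfalso
    have hd : dep M v = 1 := by omega
    obtain ⟨k, hk⟩ := dep_one_simple hs hv hd
    exact absurd hk (h k)
  · exact h2

lemma pair_simple_nonpos (hs : M.Small) {m i : I} (hne : m ≠ i) :
    bform M (sroot m) (sroot i) ≤ 0 := by
  rw [bform_sroot_sroot]; exact cf_nonpos hs hne

lemma eq_of_simple_pair_pos (hs : M.Small) {m i : I}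
    (h : 0 < bform M (sroot m) (sroot i)) : m = i := by
  by_contra hne
  exact absurd h (not_lt.mpr (pair_simple_nonpos hs hne))

/-- Along a minimal word, the first reflection sends a positive root of depth `n ≥ 2` to a
positive root of depth `n − 1`. -/
lemma chain {v : I → ℝ} (hv : IsPos M v) {n : ℕ} (hn : dep M v = n) (h2 : 2 ≤ n) :
    ∃ k, IsPos M (srefl M k v) ∧ dep M (srefl M k v) + 1 = n := by
  obtain ⟨l, hl, m, hm⟩ := dep_witness hv.1
  rw [hn] at hl
  rcases l.eq_nil_or_concat with rfl | ⟨L, k, rfl⟩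
  · simp at hl; omega
  rw [List.concat_eq_append] at hl hm
  refine ⟨k, ?_, ?_⟩
  · refine ⟨IsRoot.srefl k v hv.1, ?_⟩
    by_contra hneg
    push_neg at hneg
    obtain ⟨m0, hm0⟩ := hneg
    have hle1 : dep M v ≤ ([k] : List I).length :=
      dep_le (show act M [k] v m0 < 0 from hm0)
    simp at hle1
    omega
  · have hup : dep M (srefl M k v) ≤ L.length := by
      refine dep_le (l := L) (k := m) ?_
      have : act M (L ++ [k]) v = act M L (srefl M k v) := by
        rw [act_append]; rfl
      rw [← this]
      exact hm
    have hlow : dep M v ≤ dep M (srefl M k v) + 1 := dep_le_srefl hv.1 k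
    have hL : L.length + 1 = n := by simpa using hl
    omega

/-- The key depth lemma: reflecting a positive root with positive pairing strictly
decreases the depth. -/
theorem depA (hs : M.Small) : ∀ n : ℕ, ∀ v : I → ℝ, IsPos M v → dep M v = n →
    ∀ i : I, 0 < bform M v (sroot i) → v ≠ sroot i →
    IsPos M (srefl M i v) ∧ dep M (srefl M i v) + 1 = n := by
  intro n
  induction n using Nat.strong_induction_on with
  | _ n IH =>
    intro v hv hn i hpair hne
    -- the ascent lemma available below depth n
    have B' : ∀ m, m < n → ∀ w : I → ℝ, IsPos M w → dep M w = m → ∀ x : I,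
        bform M w (sroot x) < 0 → IsPos M (srefl M x w) ∧ dep M (srefl M x w) = m + 1 := by
      intro m hm w hw hdw x hx
      have hwpos : IsPos M (srefl M x w) := by
        refine ⟨IsRoot.srefl x w hw.1, ?_⟩
        intro mm
        rcases eq_or_ne mm x with rfl | hmm
        · rw [srefl_apply_self]
          have := hw.2 mm
          linarith
        · rw [srefl_apply_ne M x w hmm]
          exact hw.2 mm
      refine ⟨hwpos, ?_⟩
      have hub : dep M (srefl M x w) ≤ m + 1 := hdw ▸ dep_srefl_le hw.1 x
      rcases Nat.lt_or_ge (dep M (srefl M x w)) (m + 1) with hlt | hge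
      · exfalso
        have hm' : dep M (srefl M x w) < n := by omega
        have hp2 : 0 < bform M (srefl M x w) (sroot x) := by
          rw [bform_srefl_self]; linarith
        have hne2 : srefl M x w ≠ sroot x := by
          intro hh
          have : w = srefl M x (sroot x) := by rw [← hh, srefl_srefl]
          have hwx : w x = srefl M x (sroot x) x := by rw [← this]
          rw [srefl_apply_self, bform_sroot_self, sroot_self] at hwx
          have := hw.2 x
          linarith
        obtain ⟨_, hdd⟩ := IH _ hm' (srefl M x w) hwpos rfl x hp2 hne2
        rw [srefl_srefl] at hdd
        omega
      · omega
    -- positivity is free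
    have hposv : IsPos M (srefl M i v) := refl_pos hs hv hne
    refine ⟨hposv, ?_⟩
    -- n ≥ 2
    have h1n : 1 ≤ n := hn ▸ dep_pos hv
    have hn2 : 2 ≤ n := by
      rcases Nat.lt_or_ge n 2 with hlt | hge
      · exfalso
        have h1 : dep M v = 1 := by omega
        obtain ⟨k, rfl⟩ := dep_one_simple hs hv h1
        exact hne (by rw [eq_of_simple_pair_pos hs hpair])
      · exact hge
    -- chain
    obtain ⟨k, hβpos, hβdep⟩ := chain hv hn hn2
    set β := srefl M k v with hβ
    have hvβ : v = srefl M k β := by rw [hβ, srefl_srefl]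
    set p := bform M v (sroot k) with hp
    have hβk : bform M β (sroot k) = -p := bform_srefl_self M k v
    have hppos : 0 < p := by
      rcases lt_trichotomy p 0 with hplt | hp0 | hpgt
      · exfalso
        have hβk' : 0 < bform M β (sroot k) := by rw [hβk]; linarith
        have hβne : β ≠ sroot k := by
          intro hh
          have : v k = srefl M k (sroot k) k := by rw [← hh, ← hvβ]
          rw [srefl_apply_self, bform_sroot_self, sroot_self] at this
          have := hv.2 k
          linarith
        obtain ⟨_, hdd⟩ := IH (n - 1) (by omega) β hβpos (by omega) k hβk' hβne
        rw [hβ, srefl_srefl] at hdd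
        omega
      · exfalso
        have h0' : bform M v (sroot k) = 0 := by rw [← hp]; exact hp0
        have hβv : β = v := by rw [hβ]; exact srefl_of_bform_zero h0'
        rw [hβv, hn] at hβdep
        omega
      · exact hpgt
    by_cases hki : k = i
    · subst hki; rw [← hβ]; omega
    · -- k ≠ i
      have hsβi : bform M β (sroot i) = bform M v (sroot i) - p * cf M k i :=
        bform_srefl_left M k v i
      rcases cf_offdiag hs hki with hcf | hcf
      · -- commuting case
        have hik : cf M i k = 0 := by rw [cf_comm]; exact hcf
        have hβi : 0 < bform M β (sroot i) := by
          rw [hsβi, hcf]; linarith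
        have hβne : β ≠ sroot i := by
          intro hh
          apply hne
          rw [hvβ, hh, srefl_def, bform_sroot_sroot, hik, zero_smul, sub_zero]
        obtain ⟨hδpos, hδdep⟩ := IH (n - 1) (by omega) β hβpos (by omega) i hβi hβne
        set δ := srefl M i β with hδ
        have hcomm : srefl M i v = srefl M k δ := by
          rw [hvβ, hδ]
          exact comm_pt hik β
        have hub : dep M (srefl M k δ) ≤ dep M δ + 1 := dep_srefl_le hδpos.1 k
        have hlb : dep M v ≤ dep M (srefl M i v) + 1 := dep_le_srefl hv.1 i
        have hd1 := dep_pos hδpos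
        rw [hcomm] at hlb ⊢
        omega
      · -- braid case
        have hik : cf M i k = -1 := by rw [cf_comm]; exact hcf
        have hβi : bform M β (sroot i) = bform M v (sroot i) + p := by
          rw [hsβi, hcf]; ring
        by_cases hβsi : β = sroot i
        · -- v = α_i + α_k, s_i v = α_k
          have hvik : v = sroot i + sroot k := by
            rw [hvβ, hβsi, srefl_def, bform_sroot_sroot, hik]
            ext m
            simp only [Pi.sub_apply, Pi.add_apply, Pi.smul_apply, smul_eq_mul]
            ring
          have hpairv : bform M v (sroot i) = 1 := by
            rw [hvik, bform_add_left, bform_sroot_self, bform_sroot_sroot, hcf]; ring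
          have hres : srefl M i v = sroot k := by
            rw [srefl_def, hpairv, hvik]
            ext m
            simp only [Pi.sub_apply, Pi.add_apply, Pi.smul_apply, smul_eq_mul]
            ring
          have hβ1 : dep M β = 1 := by rw [hβsi]; exact dep_sroot M i
          rw [hres, dep_sroot]
          omega
        · obtain ⟨hδpos, hδdep⟩ := IH (n - 1) (by omega) β hβpos (by omega) i
            (by rw [hβi]; linarith) hβsi
          set δ := srefl M i β with hδ
          have hδi : bform M δ (sroot i) = -(bform M v (sroot i) + p) := by
            rw [hδ, bform_srefl_self, hβi]
          have hδk : bform M δ (sroot k) = bform M v (sroot i) := by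
            rw [hδ, bform_srefl_left, hβk, hβi, hik]; ring
          have hδne : δ ≠ sroot k := by
            intro hh
            have hββ : β = srefl M i (sroot k) := by rw [← hh, hδ, srefl_srefl]
            have : bform M β (sroot k) = 1 := by
              rw [hββ, bform_srefl_left, bform_sroot_self, bform_sroot_sroot, hcf, hik]
              ring
            rw [hβk] at this
            linarith
          have hd1 := dep_pos hδpos
          obtain ⟨hεpos, hεdep⟩ := IH (dep M δ) (by omega) δ hδpos rfl k
            (by rw [hδk]; exact hpair) hδne
          set ε := srefl M k δ with hε
          have hεi : bform M ε (sroot i) = -p := by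
            rw [hε, bform_srefl_left, hδi, hδk, hcf]; ring
          have hd2 := dep_pos hεpos
          obtain ⟨hζpos, hζdep⟩ := B' (dep M ε) (by omega) ε hεpos rfl i
            (by rw [hεi]; linarith)
          set ζ := srefl M i ε with hζ
          have hζk : bform M ζ (sroot k) = -(bform M v (sroot i)) - p := by
            rw [hζ, bform_srefl_left, hεi]
            have hεk : bform M ε (sroot k) = -(bform M v (sroot i)) := by
              rw [hε, bform_srefl_self, hδk]
            rw [hεk, hik]; ring
          obtain ⟨hξpos, hξdep⟩ := B' (dep M ζ) (by omega) ζ hζpos rfl k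
            (by rw [hζk]; linarith)
          have hfinal : srefl M i v = srefl M k ζ := by
            rw [hvβ, hζ, hε, hδ]
            have hββ : β = srefl M i δ := by rw [hδ, srefl_srefl]
            calc srefl M i (srefl M k β) = srefl M i (srefl M k (srefl M i δ)) := by
                  rw [← hββ]
            _ = srefl M k (srefl M i (srefl M k δ)) := braid_pt hik δ
            _ = srefl M k (srefl M i (srefl M k (srefl M i β))) := by rw [hδ]
          rw [hfinal]
          omega

/-- Reflecting a positive root with negative pairing increases the depth by one. -/
theorem depB (hs : M.Small) {v : I → ℝ} (hv : IsPos M v) {x : I}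
    (hx : bform M v (sroot x) < 0) :
    IsPos M (srefl M x v) ∧ dep M (srefl M x v) = dep M v + 1 := by
  have hwpos : IsPos M (srefl M x v) := by
    refine ⟨IsRoot.srefl x v hv.1, ?_⟩
    intro mm
    rcases eq_or_ne mm x with rfl | hmm
    · rw [srefl_apply_self]
      have := hv.2 mm
      linarith
    · rw [srefl_apply_ne M x v hmm]
      exact hv.2 mm
  refine ⟨hwpos, ?_⟩
  have hub : dep M (srefl M x v) ≤ dep M v + 1 := dep_srefl_le hv.1 x
  rcases Nat.lt_or_ge (dep M (srefl M x v)) (dep M v + 1) with hlt | hge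
  · exfalso
    have hp2 : 0 < bform M (srefl M x v) (sroot x) := by
      rw [bform_srefl_self]; linarith
    have hne2 : srefl M x v ≠ sroot x := by
      intro hh
      have : v x = srefl M x (sroot x) x := by rw [← hh, srefl_srefl]
      rw [srefl_apply_self, bform_sroot_self, sroot_self] at this
      have := hv.2 x
      linarith
    obtain ⟨_, hdd⟩ := depA hs (dep M (srefl M x v)) (srefl M x v) hwpos rfl x hp2 hne2
    rw [srefl_srefl] at hdd
    omega
  · omega

/-- Convenient global form of `depA`. -/
theorem depA' (hs : M.Small) {v : I → ℝ} (hv : IsPos M v) {i : I}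
    (hpair : 0 < bform M v (sroot i)) (hne : v ≠ sroot i) :
    IsPos M (srefl M i v) ∧ dep M (srefl M i v) + 1 = dep M v :=
  depA hs (dep M v) v hv rfl i hpair hne

/-- Every positive root of depth at least two admits a reducing index. -/
lemma reducer (hs : M.Small) {v : I → ℝ} (hv : IsPos M v) (h2 : 2 ≤ dep M v) :
    ∃ k, 0 < bform M v (sroot k) ∧ IsPos M (srefl M k v) ∧
      dep M (srefl M k v) + 1 = dep M v := by
  obtain ⟨k, hkpos, hkdep⟩ := chain hv rfl h2
  refine ⟨k, ?_, hkpos, hkdep⟩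
  rcases lt_trichotomy (bform M v (sroot k)) 0 with hlt | h0 | hgt
  · obtain ⟨_, hdd⟩ := depB hs hv hlt
    omega
  · rw [srefl_of_bform_zero h0] at hkdep
    omega
  · exact hgt

end LKProof
namespace LKProof
open LK

set_option linter.unusedSectionVars false

variable {I : Type} [Fintype I] [DecidableEq I] {M : CoxM I}
variable {R : Type} [CommRing R]

lemma lift_ev (g : Pos M → R) (α : Pos M) :
    (Finsupp.lift R R (Pos M) g) (ev M R α) = g α := by
  rw [ev]
  simp

lemma phi_ev (a b c d : R) (j : I) (α : Pos M) :
    phi M R a b c d j (ev M R α) = phiAux M R a b c d j α := by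
  rw [phi, ev]
  simp

lemma phiAux_simple (a b c d : R) (j : I) (α : Pos M) (h : α.1 = sroot j) :
    phiAux M R a b c d j α = 0 := by
  rw [phiAux, if_pos h]

lemma phiAux_fix (a b c d : R) (j : I) (α : Pos M) (h0 : bform M α.1 (sroot j) = 0)
    (hne : α.1 ≠ sroot j) :
    phiAux M R a b c d j α = d • ev M R α := by
  rw [phiAux, if_neg hne, if_pos (srefl_of_bform_zero h0)]

lemma phiAux_down (hs : M.Small) (a b c d : R) (j : I) (α β : Pos M)
    (hpos : 0 < bform M α.1 (sroot j)) (hne : α.1 ≠ sroot j)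
    (hβ : β.1 = srefl M j α.1) :
    phiAux M R a b c d j α = b • ev M R β := by
  obtain ⟨hp, hd⟩ := depA' hs α.2 hpos hne
  have h1 : srefl M j α.1 ≠ α.1 := by
    intro hh
    have := bform_zero_of_srefl_eq hh
    linarith
  have h2 : ¬ dep M α.1 < dep M (srefl M j α.1) := by omega
  have hβeq : β = (⟨srefl M j α.1, hp⟩ : Pos M) := Subtype.ext hβ
  rw [phiAux, if_neg hne, if_neg h1, dif_pos hp, if_neg h2, ← hβeq]

lemma phiAux_up (hs : M.Small) (a b c d : R) (j : I) (α β : Pos M)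
    (hneg : bform M α.1 (sroot j) < 0) (hβ : β.1 = srefl M j α.1) :
    phiAux M R a b c d j α = a • ev M R α + c • ev M R β := by
  obtain ⟨hp, hd⟩ := depB hs α.2 hneg
  have hne : α.1 ≠ sroot j := by
    intro hh
    rw [hh, bform_sroot_self] at hneg
    linarith
  have h1 : srefl M j α.1 ≠ α.1 := by
    intro hh
    have := bform_zero_of_srefl_eq hh
    linarith
  have h2 : dep M α.1 < dep M (srefl M j α.1) := by omega
  have hβeq : β = (⟨srefl M j α.1, hp⟩ : Pos M) := Subtype.ext hβ
  rw [phiAux, if_neg hne, if_neg h1, dif_pos hp, if_pos h2, ← hβeq]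

/-- The scalar value `f_i (φ_j e_α)`. -/
noncomputable def Lval (M : CoxM I) (R : Type) [CommRing R] (a b c d : R)
    (F : I → Pos M → R) (i j : I) (α : Pos M) : R :=
  (Finsupp.lift R R (Pos M) (F i)) (phi M R a b c d j (ev M R α))

lemma Lval_simple (a b c d : R) (F : I → Pos M → R) (i j : I) (α : Pos M)
    (h : α.1 = sroot j) : Lval M R a b c d F i j α = 0 := by
  rw [Lval, phi_ev, phiAux_simple a b c d j α h, map_zero]

lemma Lval_fix (a b c d : R) (F : I → Pos M → R) (i j : I) (α : Pos M)
    (h0 : bform M α.1 (sroot j) = 0) (hne : α.1 ≠ sroot j) :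
    Lval M R a b c d F i j α = d * F i α := by
  rw [Lval, phi_ev, phiAux_fix a b c d j α h0 hne, map_smul, lift_ev, smul_eq_mul]

lemma Lval_down (hs : M.Small) (a b c d : R) (F : I → Pos M → R) (i j : I) (α β : Pos M)
    (hpos : 0 < bform M α.1 (sroot j)) (hne : α.1 ≠ sroot j)
    (hβ : β.1 = srefl M j α.1) :
    Lval M R a b c d F i j α = b * F i β := by
  rw [Lval, phi_ev, phiAux_down hs a b c d j α β hpos hne hβ, map_smul, lift_ev,
    smul_eq_mul]

lemma Lval_up (hs : M.Small) (a b c d : R) (F : I → Pos M → R) (i j : I) (α β : Pos M)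
    (hneg : bform M α.1 (sroot j) < 0) (hβ : β.1 = srefl M j α.1) :
    Lval M R a b c d F i j α = a * F i α + c * F i β := by
  rw [Lval, phi_ev, phiAux_up hs a b c d j α β hneg hβ, map_add, map_smul, map_smul,
    lift_ev, lift_ev, smul_eq_mul, smul_eq_mul]

end LKProof
namespace LKProof
open LK

set_option linter.unusedSectionVars false

variable {I : Type} [Fintype I] [DecidableEq I] {M : CoxM I}
variable {R : Type} [CommRing R]

lemma ne_of_m_ne_one {i j : I} {m : ℕ} (h : M.m i j = m) (hm : m ≠ 1) : i ≠ j := by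
  rintro rfl
  rw [(M.one_iff i i).mpr rfl] at h
  omega

lemma ne_sroot_of_nonpos {α : Pos M} {i : I} (h : bform M α.1 (sroot i) ≤ 0) :
    α.1 ≠ sroot i := by
  intro hh
  rw [hh, bform_sroot_self] at h
  linarith

lemma ne_sroot_of_neg {α : Pos M} {i : I} (h : bform M α.1 (sroot i) < 0) :
    α.1 ≠ sroot i :=
  ne_sroot_of_nonpos h.le

lemma dep_ge_two_of_pair (hs : M.Small) {α : Pos M} {j i : I}
    (ht : 0 < bform M α.1 (sroot j)) (hne : α.1 ≠ sroot j)
    (hi : bform M α.1 (sroot i) ≤ 0 ∨ 0 < bform M α.1 (sroot j)) : 2 ≤ dep M α.1 := by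
  apply dep_ge_two hs α.2
  intro k hk
  rw [hk] at ht hne
  exact hne (by rw [eq_of_simple_pair_pos hs ht])

section Master

variable (hs : M.Small) {b c d : R} (hb : IsUnit b) (hc : IsUnit c) (hd : IsUnit d)
    (a : R) (ha : a = d - b * c * Ring.inverse d) (fr : R) (F : I → Pos M → R)
    (hC1 : ∀ i : I, F i (simplePos M i) = fr)
    (hC2 : ∀ i j : I, i ≠ j → F i (simplePos M j) = 0)
    (hC3 : ∀ (i : I) (aa : Pos M), 2 ≤ dep M aa.1 → 0 < bform M aa.1 (sroot i) →
      F i aa = -(a * fr * Ring.inverse c) * (b * Ring.inverse d) ^ (dep M aa.1 - 2))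
    (hC4 : ∀ (i j : I) (aa bb : Pos M), 2 ≤ dep M aa.1 → bform M aa.1 (sroot i) ≤ 0 →
      0 < bform M aa.1 (sroot j) → bb.1 = srefl M j aa.1 → M.m i j = 2 →
      F i aa = b * Ring.inverse d * F i bb)

include hs hb hc hd ha hC1 hC2 hC3 hC4 in
/-- The `m = 2` Lawrence–Krammer relation, evaluated on a basis vector. -/
lemma masterR2 (i j : I) (hm2 : M.m i j = 2) (α : Pos M) :
    Lval M R a b c d F i j α = d * F i α := by
  have hij : i ≠ j := ne_of_m_ne_one hm2 (by omega)
  have hm2' : M.m j i = 2 := by rw [M.symm]; exact hm2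
  have hcfij : cf M i j = 0 := cf_two hm2
  have hcfji : cf M j i = 0 := cf_two hm2'
  have hdinv : d * Ring.inverse d = 1 := Ring.mul_inverse_cancel d hd
  by_cases hαj : α.1 = sroot j
  · -- α = α_j
    rw [Lval_simple a b c d F i j α hαj]
    have : α = simplePos M j := Subtype.ext hαj
    rw [this, hC2 i j hij, mul_zero]
  rcases lt_trichotomy (bform M α.1 (sroot j)) 0 with ht | ht | ht
  · -- t < 0 : φ_j e_α = a e_α + c e_γ
    obtain ⟨hγpos, hγdep⟩ := depB hs α.2 ht
    set γ : Pos M := ⟨srefl M j α.1, hγpos⟩ with hγ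
    rw [Lval_up hs a b c d F i j α γ ht rfl]
    have hγj : 0 < bform M γ.1 (sroot j) := by
      show 0 < bform M (srefl M j α.1) (sroot j)
      rw [bform_srefl_self]; linarith
    have hγi : bform M γ.1 (sroot i) = bform M α.1 (sroot i) := by
      show bform M (srefl M j α.1) (sroot i) = _
      rw [bform_srefl_left, hcfji]; ring
    have hγdep2 : 2 ≤ dep M γ.1 := by
      have := dep_pos α.2
      show 2 ≤ dep M (srefl M j α.1)
      omega
    have hγback : α.1 = srefl M j γ.1 := by
      show α.1 = srefl M j (srefl M j α.1)
      rw [srefl_srefl]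
    by_cases hsi : bform M α.1 (sroot i) ≤ 0
    · -- C4 applied to γ
      have h4 := hC4 i j γ α hγdep2 (by rw [hγi]; exact hsi) hγj hγback hm2
      rw [h4, ha]
      ring
    · -- s > 0 : explicit values via C3
      push_neg at hsi
      have hαi : α.1 ≠ sroot i := by
        intro hh
        rw [hh, bform_sroot_sroot, hcfij] at ht
        linarith
      have hα2 : 2 ≤ dep M α.1 := by
        apply dep_ge_two hs α.2
        intro k hk
        rw [hk] at hsi
        have := eq_of_simple_pair_pos hs hsi
        rw [hk, this] at hαi
        exact hαi rfl
      have hv1 := hC3 i α hα2 hsi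
      have hv2 := hC3 i γ hγdep2 (by rw [hγi]; exact hsi)
      have hγd : dep M γ.1 = dep M α.1 + 1 := hγdep
      rw [hv1, hv2, hγd]
      have he : dep M α.1 + 1 - 2 = (dep M α.1 - 2) + 1 := by omega
      rw [he, pow_succ, ha]
      ring
  · -- t = 0
    rw [Lval_fix a b c d F i j α ht hαj]
  · -- t > 0 : φ_j e_α = b e_β
    obtain ⟨hβpos, hβdep⟩ := depA' hs α.2 ht hαj
    set β : Pos M := ⟨srefl M j α.1, hβpos⟩ with hβ
    rw [Lval_down hs a b c d F i j α β ht hαj rfl]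
    have hα2 : 2 ≤ dep M α.1 := by
      apply dep_ge_two hs α.2
      intro k hk
      rw [hk] at ht
      exact hαj (by rw [hk, eq_of_simple_pair_pos hs ht])
    have hβi : bform M β.1 (sroot i) = bform M α.1 (sroot i) := by
      show bform M (srefl M j α.1) (sroot i) = _
      rw [bform_srefl_left, hcfji]; ring
    by_cases hsi : bform M α.1 (sroot i) ≤ 0
    · have h4 := hC4 i j α β hα2 hsi ht rfl hm2
      rw [h4]
      linear_combination (-(b * F i β)) * hdinv
    · push_neg at hsi
      have hαi : α.1 ≠ sroot i := by
        intro hh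
        rw [hh, bform_sroot_sroot, hcfij] at ht
        linarith
      have hβne : β.1 ≠ sroot i := by
        intro hh
        have h1 : α.1 = srefl M j (sroot i) := by
          rw [← hh]
          show α.1 = srefl M j (srefl M j α.1)
          rw [srefl_srefl]
        have h2 : srefl M j (sroot i) = sroot i :=
          srefl_of_bform_zero (by rw [bform_sroot_sroot]; exact hcfij)
        exact hαi (h1.trans h2)
      have hβ2 : 2 ≤ dep M β.1 := by
        apply dep_ge_two hs hβpos
        intro k hk
        have h0 : 0 < bform M β.1 (sroot i) := by rw [hβi]; exact hsi
        have h0' : 0 < bform M (sroot k) (sroot i) := by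
          rw [← hk]
          exact h0
        apply hβne
        show srefl M j α.1 = sroot i
        rw [hk, eq_of_simple_pair_pos hs h0']
      have hv1 := hC3 i α hα2 hsi
      have hv2 := hC3 i β hβ2 (by rw [hβi]; exact hsi)
      have hβd : dep M β.1 + 1 = dep M α.1 := hβdep
      rw [hv1, hv2]
      have he : dep M α.1 - 2 = (dep M β.1 - 2) + 1 := by omega
      rw [he, pow_succ]
      linear_combination (-(b * -(a * fr * Ring.inverse c) *
        (b * Ring.inverse d) ^ (dep M β.1 - 2))) * hdinv

end Master
end LKProof
namespace LKProof
open LK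

set_option linter.unusedSectionVars false
set_option maxHeartbeats 1000000

variable {I : Type} [Fintype I] [DecidableEq I] {M : CoxM I}
variable {R : Type} [CommRing R]

lemma srefl_sroot_adj {k j : I} (h : cf M k j = -1) :
    srefl M j (sroot k) = sroot k + sroot j := by
  rw [srefl_def, bform_sroot_sroot, h]
  ext m
  simp only [Pi.sub_apply, Pi.add_apply, Pi.smul_apply, smul_eq_mul]
  ring

lemma srefl_theta {i j : I} (hji : cf M j i = -1) :
    srefl M i (sroot i + sroot j) = sroot j := by
  rw [srefl_def, bform_add_left, bform_sroot_self, bform_sroot_sroot, hji]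
  ext m
  simp only [Pi.sub_apply, Pi.add_apply, Pi.smul_apply, smul_eq_mul]
  ring

lemma bform_theta {i j x : I} :
    bform M (sroot i + sroot j) (sroot x) = cf M i x + cf M j x := by
  rw [bform_add_left, bform_sroot_sroot, bform_sroot_sroot]

lemma sroot_ne_sroot {k j : I} (h : k ≠ j) : (sroot k : I → ℝ) ≠ sroot j := by
  intro hh
  have h1 := congrFun hh k
  rw [sroot_self, sroot_ne h] at h1
  norm_num at h1

section Master

variable (hs : M.Small) {b c d : R} (hb : IsUnit b) (hc : IsUnit c) (hd : IsUnit d)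
    (a : R) (ha : a = d - b * c * Ring.inverse d) (fr : R) (F : I → Pos M → R)
    (hC1 : ∀ i : I, F i (simplePos M i) = fr)
    (hC2 : ∀ i j : I, i ≠ j → F i (simplePos M j) = 0)
    (hC3 : ∀ (i : I) (aa : Pos M), 2 ≤ dep M aa.1 → 0 < bform M aa.1 (sroot i) →
      F i aa = -(a * fr * Ring.inverse c) * (b * Ring.inverse d) ^ (dep M aa.1 - 2))
    (hC4 : ∀ (i j : I) (aa bb : Pos M), 2 ≤ dep M aa.1 → bform M aa.1 (sroot i) ≤ 0 →
      0 < bform M aa.1 (sroot j) → bb.1 = srefl M j aa.1 → M.m i j = 2 →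
      F i aa = b * Ring.inverse d * F i bb)
    (hC5 : ∀ (i j : I) (aa bb gg : Pos M), 2 ≤ dep M aa.1 → bform M aa.1 (sroot i) ≤ 0 →
      0 < bform M aa.1 (sroot j) → bb.1 = srefl M j aa.1 → M.m i j = 3 →
      gg.1 = srefl M i bb.1 → dep M gg.1 + 1 = dep M bb.1 →
      F i aa = Ring.inverse c * (b * F j gg - a * F i bb))
    (hC6 : ∀ (i j : I) (aa bb : Pos M), 2 ≤ dep M aa.1 → bform M aa.1 (sroot i) ≤ 0 →
      0 < bform M aa.1 (sroot j) → bb.1 = srefl M j aa.1 → M.m i j = 3 →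
      srefl M i bb.1 = bb.1 →
      F i aa = Ring.inverse c * (d * F j bb - a * F i bb))
    (hC7 : ∀ (i j : I) (aa bb : Pos M), 2 ≤ dep M aa.1 → bform M aa.1 (sroot i) ≤ 0 →
      0 < bform M aa.1 (sroot j) → bb.1 = srefl M j aa.1 → M.m i j = 3 →
      dep M (srefl M i bb.1) = dep M bb.1 + 1 →
      F i aa = b * Ring.inverse d * F i bb + d * Ring.inverse c * F j bb
        + a * d * fr * Ring.inverse (c * c) * (b * Ring.inverse d) ^ (dep M aa.1 - 3))

include hs hb hc hd ha hC1 hC2 hC3 hC4 hC5 hC6 hC7 in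
/-- The `m = 3` Lawrence–Krammer relation, evaluated on a basis vector. -/
lemma masterR3 : ∀ n : ℕ, ∀ α : Pos M, dep M α.1 = n → ∀ i j : I, M.m i j = 3 →
    Lval M R a b c d F i j α = Lval M R a b c d F j i α := by
  have hdinv : d * Ring.inverse d = 1 := Ring.mul_inverse_cancel d hd
  have hcinv : c * Ring.inverse c = 1 := Ring.mul_inverse_cancel c hc
  have hccinv : (c * c) * Ring.inverse (c * c) = 1 :=
    Ring.mul_inverse_cancel (c * c) (hc.mul hc)
  intro n
  induction n using Nat.strong_induction_on with
  | _ n IH =>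
    intro α hdep i j hm3
    have hij : i ≠ j := ne_of_m_ne_one hm3 (by omega)
    have hm3' : M.m j i = 3 := by rw [M.symm]; exact hm3
    have hcfij : cf M i j = -1 := cf_three hm3
    have hcfji : cf M j i = -1 := cf_three hm3'
    -- value of `f_{i'} (φ_{j'} e_{α_{i'}})`
    have simpval : ∀ i' j' : I, M.m i' j' = 3 →
        Lval M R a b c d F i' j' (simplePos M i') = 0 := by
      intro i' j' h3
      have h3' : M.m j' i' = 3 := by rw [M.symm]; exact h3
      have hcf1 : cf M i' j' = -1 := cf_three h3
      have hcf2 : cf M j' i' = -1 := cf_three h3'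
      have hpair : bform M (simplePos M i').1 (sroot j') < 0 := by
        show bform M (sroot i') (sroot j') < 0
        rw [bform_sroot_sroot, hcf1]; norm_num
      obtain ⟨hpos, hdp⟩ := depB hs (simplePos M i').2 hpair
      set Θ : Pos M := ⟨srefl M j' (simplePos M i').1, hpos⟩ with hΘ
      rw [Lval_up hs a b c d F i' j' (simplePos M i') Θ hpair rfl]
      have hdp2 : dep M Θ.1 = 2 := by
        show dep M (srefl M j' (simplePos M i').1) = 2
        rw [hdp]
        have : dep M (simplePos M i').1 = 1 := dep_sroot M i'
        omega
      have hpairΘ : 0 < bform M Θ.1 (sroot i') := by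
        show 0 < bform M (srefl M j' (simplePos M i').1) (sroot i')
        rw [bform_srefl_left]
        show 0 < bform M (sroot i') (sroot i') -
          bform M (sroot i') (sroot j') * cf M j' i'
        rw [bform_sroot_self, bform_sroot_sroot, hcf1, hcf2]
        norm_num
      have hv := hC3 i' Θ (by omega) hpairΘ
      rw [hv, hdp2, hC1 i']
      norm_num
      linear_combination (-(a * fr)) * hcinv
    by_cases hαi : α.1 = sroot i
    · rw [Lval_simple a b c d F j i α hαi]
      have hα : α = simplePos M i := Subtype.ext hαi
      rw [hα]
      exact simpval i j hm3
    by_cases hαj : α.1 = sroot j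
    · rw [Lval_simple a b c d F i j α hαj]
      have hα : α = simplePos M j := Subtype.ext hαj
      rw [hα]
      exact (simpval j i hm3').symm
    by_cases hsimp : ∃ k, α.1 = sroot k
    · -- α is a simple root α_k with k ∉ {i, j}
      obtain ⟨k, hk⟩ := hsimp
      have hki : k ≠ i := by rintro rfl; exact hαi hk
      have hkj : k ≠ j := by rintro rfl; exact hαj hk
      have hα : α = simplePos M k := Subtype.ext hk
      rw [hα]
      -- case where `k` commutes with `j'`: `φ_{j'}` fixes `e_{α_k}`
      have simpvalA : ∀ i' j' : I, M.m i' j' = 3 → k ≠ i' → k ≠ j' → cf M k j' = 0 →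
          Lval M R a b c d F i' j' (simplePos M k) = 0 := by
        intro i' j' h3 hki' hkj' hcf0
        have h0 : bform M (simplePos M k).1 (sroot j') = 0 := by
          show bform M (sroot k) (sroot j') = 0
          rw [bform_sroot_sroot]; exact hcf0
        have hne0 : (simplePos M k).1 ≠ sroot j' := sroot_ne_sroot hkj'
        rw [Lval_fix a b c d F i' j' (simplePos M k) h0 hne0, hC2 i' k (Ne.symm hki'),
          mul_zero]
      -- case `m k j' = 3`, `m k i' = 2`
      have simpvalB : ∀ i' j' : I, M.m i' j' = 3 → k ≠ i' → k ≠ j' → cf M k j' = -1 →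
          cf M k i' = 0 → Lval M R a b c d F i' j' (simplePos M k) = 0 := by
        intro i' j' h3 hki' hkj' hcfkj hcfki
        have hpair : bform M (simplePos M k).1 (sroot j') < 0 := by
          show bform M (sroot k) (sroot j') < 0
          rw [bform_sroot_sroot, hcfkj]; norm_num
        obtain ⟨hpos, hdp⟩ := depB hs (simplePos M k).2 hpair
        set Ξ : Pos M := ⟨srefl M j' (simplePos M k).1, hpos⟩ with hΞ
        rw [Lval_up hs a b c d F i' j' (simplePos M k) Ξ hpair rfl]
        have hdp2 : dep M Ξ.1 = 2 := by
          show dep M (srefl M j' (simplePos M k).1) = 2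
          rw [hdp]
          have : dep M (simplePos M k).1 = 1 := dep_sroot M k
          omega
        have hcfjk : cf M j' k = -1 := by rw [cf_comm]; exact hcfkj
        have hΞi : bform M Ξ.1 (sroot i') ≤ 0 := by
          show bform M (srefl M j' (simplePos M k).1) (sroot i') ≤ 0
          rw [bform_srefl_left]
          show bform M (sroot k) (sroot i') -
            bform M (sroot k) (sroot j') * cf M j' i' ≤ 0
          have hcfji' : cf M j' i' = -1 := cf_three (by rw [M.symm]; exact h3)
          rw [bform_sroot_sroot, bform_sroot_sroot, hcfki, hcfkj, hcfji']
          norm_num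
        have hΞj : 0 < bform M Ξ.1 (sroot j') := by
          show 0 < bform M (srefl M j' (simplePos M k).1) (sroot j')
          rw [bform_srefl_self]
          show 0 < -bform M (sroot k) (sroot j')
          rw [bform_sroot_sroot, hcfkj]; norm_num
        have hback : (simplePos M k).1 = srefl M j' Ξ.1 := by
          show sroot k = srefl M j' (srefl M j' (simplePos M k).1)
          rw [srefl_srefl]
          rfl
        have hfix : srefl M i' (simplePos M k).1 = (simplePos M k).1 := by
          show srefl M i' (sroot k) = sroot k
          exact srefl_of_bform_zero (by rw [bform_sroot_sroot]; exact hcfki)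
        have h6 := hC6 i' j' Ξ (simplePos M k) (by omega) hΞi hΞj hback h3 hfix
        rw [h6, hC2 j' k (Ne.symm hkj'), hC2 i' k (Ne.symm hki')]
        ring
      -- case `m k j' = 3`, `m k i' = 3` (triangle)
      have simpvalC : ∀ i' j' : I, M.m i' j' = 3 → k ≠ i' → k ≠ j' → cf M k j' = -1 →
          cf M k i' = -1 →
          Lval M R a b c d F i' j' (simplePos M k) =
            c * (a * d * fr * Ring.inverse (c * c)) := by
        intro i' j' h3 hki' hkj' hcfkj hcfki
        have hpair : bform M (simplePos M k).1 (sroot j') < 0 := by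
          show bform M (sroot k) (sroot j') < 0
          rw [bform_sroot_sroot, hcfkj]; norm_num
        obtain ⟨hpos, hdp⟩ := depB hs (simplePos M k).2 hpair
        set Ξ : Pos M := ⟨srefl M j' (simplePos M k).1, hpos⟩ with hΞ
        rw [Lval_up hs a b c d F i' j' (simplePos M k) Ξ hpair rfl]
        have hdp2 : dep M Ξ.1 = 2 := by
          show dep M (srefl M j' (simplePos M k).1) = 2
          rw [hdp]
          have : dep M (simplePos M k).1 = 1 := dep_sroot M k
          omega
        have hΞi : bform M Ξ.1 (sroot i') ≤ 0 := by
          show bform M (srefl M j' (simplePos M k).1) (sroot i') ≤ 0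
          rw [bform_srefl_left]
          show bform M (sroot k) (sroot i') -
            bform M (sroot k) (sroot j') * cf M j' i' ≤ 0
          have hcfji' : cf M j' i' = -1 := cf_three (by rw [M.symm]; exact h3)
          rw [bform_sroot_sroot, bform_sroot_sroot, hcfki, hcfkj, hcfji']
          norm_num
        have hΞj : 0 < bform M Ξ.1 (sroot j') := by
          show 0 < bform M (srefl M j' (simplePos M k).1) (sroot j')
          rw [bform_srefl_self]
          show 0 < -bform M (sroot k) (sroot j')
          rw [bform_sroot_sroot, hcfkj]; norm_num
        have hback : (simplePos M k).1 = srefl M j' Ξ.1 := by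
          show sroot k = srefl M j' (srefl M j' (simplePos M k).1)
          rw [srefl_srefl]
          rfl
        have hup : bform M (simplePos M k).1 (sroot i') < 0 := by
          show bform M (sroot k) (sroot i') < 0
          rw [bform_sroot_sroot, hcfki]; norm_num
        have hdup := (depB hs (simplePos M k).2 hup).2
        have h7 := hC7 i' j' Ξ (simplePos M k) (by omega) hΞi hΞj hback h3 hdup
        have hexp : (2 : ℕ) - 3 = 0 := rfl
        rw [h7, hC2 j' k (Ne.symm hkj'), hC2 i' k (Ne.symm hki'), hdp2, hexp, pow_zero]
        ring
      rcases cf_offdiag hs hkj with hckj | hckj <;> rcases cf_offdiag hs hki with hcki | hcki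
      · rw [simpvalA i j hm3 hki hkj hckj, simpvalA j i hm3' hkj hki hcki]
      · rw [simpvalA i j hm3 hki hkj hckj, simpvalB j i hm3' hkj hki hcki hckj]
      · rw [simpvalB i j hm3 hki hkj hckj hcki, simpvalA j i hm3' hkj hki hcki]
      · rw [simpvalC i j hm3 hki hkj hckj hcki, simpvalC j i hm3' hkj hki hcki hckj]
    · -- α is not simple
      push_neg at hsimp
      have hα2 : 2 ≤ dep M α.1 := dep_ge_two hs α.2 hsimp
      -- case (s > 0, t > 0)
      have case_pp : ∀ i' j' : I, M.m i' j' = 3 → 0 < bform M α.1 (sroot i') →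
          0 < bform M α.1 (sroot j') →
          Lval M R a b c d F i' j' α = Lval M R a b c d F j' i' α := by
        intro i' j' h3 hsp htp
        have h3' : M.m j' i' = 3 := by rw [M.symm]; exact h3
        have hcf1 : cf M i' j' = -1 := cf_three h3
        have hcf2 : cf M j' i' = -1 := cf_three h3'
        obtain ⟨hβpos, hβdep⟩ := depA' hs α.2 htp (hsimp j')
        set β : Pos M := ⟨srefl M j' α.1, hβpos⟩ with hβdf
        obtain ⟨hγpos, hγdep⟩ := depA' hs α.2 hsp (hsimp i')
        set γ : Pos M := ⟨srefl M i' α.1, hγpos⟩ with hγdf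
        have hβd : dep M β.1 + 1 = dep M α.1 := hβdep
        have hγd : dep M γ.1 + 1 = dep M α.1 := hγdep
        rw [Lval_down hs a b c d F i' j' α β htp (hsimp j') rfl,
          Lval_down hs a b c d F j' i' α γ hsp (hsimp i') rfl]
        have hβi : bform M β.1 (sroot i') =
            bform M α.1 (sroot i') + bform M α.1 (sroot j') := by
          show bform M (srefl M j' α.1) (sroot i') = _
          rw [bform_srefl_left, hcf2]; ring
        have hγj : bform M γ.1 (sroot j') =
            bform M α.1 (sroot i') + bform M α.1 (sroot j') := by
          show bform M (srefl M i' α.1) (sroot j') = _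
          rw [bform_srefl_left, hcf1]; ring
        by_cases hβs : β.1 = sroot i'
        · -- α = α_{i'} + α_{j'}
          have hαθ : α.1 = sroot i' + sroot j' := by
            have h1 : α.1 = srefl M j' β.1 := by
              show α.1 = srefl M j' (srefl M j' α.1)
              rw [srefl_srefl]
            rw [h1, hβs]
            exact srefl_sroot_adj hcf1
          have hγs : γ.1 = sroot j' := by
            show srefl M i' α.1 = sroot j'
            rw [hαθ]
            exact srefl_theta hcf2
          have hβeq : β = simplePos M i' := Subtype.ext hβs
          have hγeq : γ = simplePos M j' := Subtype.ext hγs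
          rw [hβeq, hγeq, hC1, hC1]
        · have hγs : γ.1 ≠ sroot j' := by
            intro hh
            apply hβs
            have hαθ : α.1 = sroot j' + sroot i' := by
              have h1 : α.1 = srefl M i' γ.1 := by
                show α.1 = srefl M i' (srefl M i' α.1)
                rw [srefl_srefl]
              rw [h1, hh]
              exact srefl_sroot_adj hcf2
            show srefl M j' α.1 = sroot i'
            rw [hαθ]
            exact srefl_theta hcf1
          have hβip : 0 < bform M β.1 (sroot i') := by rw [hβi]; linarith
          have hγjp : 0 < bform M γ.1 (sroot j') := by rw [hγj]; linarith
          have hβ2 : 2 ≤ dep M β.1 := by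
            apply dep_ge_two hs hβpos
            intro m hm
            have h0' : 0 < bform M (sroot m) (sroot i') := by rw [← hm]; exact hβip
            apply hβs
            show srefl M j' α.1 = sroot i'
            rw [hm, eq_of_simple_pair_pos hs h0']
          have hγ2 : 2 ≤ dep M γ.1 := by
            apply dep_ge_two hs hγpos
            intro m hm
            have h0' : 0 < bform M (sroot m) (sroot j') := by rw [← hm]; exact hγjp
            apply hγs
            show srefl M i' α.1 = sroot j'
            rw [hm, eq_of_simple_pair_pos hs h0']
          rw [hC3 i' β hβ2 hβip, hC3 j' γ hγ2 hγjp]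
          have : dep M β.1 = dep M γ.1 := by omega
          rw [this]
      -- case (s > 0, t = 0)
      have case_p0 : ∀ i' j' : I, M.m i' j' = 3 → 0 < bform M α.1 (sroot i') →
          bform M α.1 (sroot j') = 0 →
          Lval M R a b c d F i' j' α = Lval M R a b c d F j' i' α := by
        intro i' j' h3 hsp ht0
        have h3' : M.m j' i' = 3 := by rw [M.symm]; exact h3
        have hcf1 : cf M i' j' = -1 := cf_three h3
        have hcf2 : cf M j' i' = -1 := cf_three h3'
        obtain ⟨hγpos, hγdep⟩ := depA' hs α.2 hsp (hsimp i')
        set γ : Pos M := ⟨srefl M i' α.1, hγpos⟩ with hγdf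
        have hγd : dep M γ.1 + 1 = dep M α.1 := hγdep
        rw [Lval_fix a b c d F i' j' α ht0 (hsimp j'),
          Lval_down hs a b c d F j' i' α γ hsp (hsimp i') rfl]
        have hγj : bform M γ.1 (sroot j') = bform M α.1 (sroot i') := by
          show bform M (srefl M i' α.1) (sroot j') = _
          rw [bform_srefl_left, hcf1, ht0]; ring
        have hγjp : 0 < bform M γ.1 (sroot j') := by rw [hγj]; exact hsp
        have hγs : γ.1 ≠ sroot j' := by
          intro hh
          have hαθ : α.1 = sroot j' + sroot i' := by
            have h1 : α.1 = srefl M i' γ.1 := by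
              show α.1 = srefl M i' (srefl M i' α.1)
              rw [srefl_srefl]
            rw [h1, hh]
            exact srefl_sroot_adj hcf2
          rw [hαθ, bform_theta, cf_self, hcf1] at ht0
          linarith
        have hγ2 : 2 ≤ dep M γ.1 := by
          apply dep_ge_two hs hγpos
          intro m hm
          have h0' : 0 < bform M (sroot m) (sroot j') := by rw [← hm]; exact hγjp
          apply hγs
          show srefl M i' α.1 = sroot j'
          rw [hm, eq_of_simple_pair_pos hs h0']
        rw [hC3 i' α hα2 hsp, hC3 j' γ hγ2 hγjp]
        have he : dep M α.1 - 2 = (dep M γ.1 - 2) + 1 := by omega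
        rw [he, pow_succ]
        linear_combination (-(a * fr * Ring.inverse c) *
          (b * Ring.inverse d) ^ (dep M γ.1 - 2) * b) * hdinv
      -- case (s > 0, t < 0)
      have case_pm : ∀ i' j' : I, M.m i' j' = 3 → 0 < bform M α.1 (sroot i') →
          bform M α.1 (sroot j') < 0 →
          Lval M R a b c d F i' j' α = Lval M R a b c d F j' i' α := by
        intro i' j' h3 hsp htm
        have h3' : M.m j' i' = 3 := by rw [M.symm]; exact h3
        have hcf1 : cf M i' j' = -1 := cf_three h3
        have hcf2 : cf M j' i' = -1 := cf_three h3'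
        obtain ⟨hΓpos, hΓdep⟩ := depA' hs α.2 hsp (hsimp i')
        set Γ : Pos M := ⟨srefl M i' α.1, hΓpos⟩ with hΓdf
        obtain ⟨hΔpos, hΔdep⟩ := depB hs α.2 htm
        set Δ : Pos M := ⟨srefl M j' α.1, hΔpos⟩ with hΔdf
        have hΓd : dep M Γ.1 + 1 = dep M α.1 := hΓdep
        have hΔd0 : dep M Δ.1 = dep M α.1 + 1 := hΔdep
        rw [Lval_up hs a b c d F i' j' α Δ htm rfl,
          Lval_down hs a b c d F j' i' α Γ hsp (hsimp i') rfl]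
        have hΔi : bform M Δ.1 (sroot i') =
            bform M α.1 (sroot i') + bform M α.1 (sroot j') := by
          show bform M (srefl M j' α.1) (sroot i') = _
          rw [bform_srefl_left, hcf2]; ring
        have hΔj : 0 < bform M Δ.1 (sroot j') := by
          show 0 < bform M (srefl M j' α.1) (sroot j')
          rw [bform_srefl_self]; linarith
        have hΓj : bform M Γ.1 (sroot j') =
            bform M α.1 (sroot i') + bform M α.1 (sroot j') := by
          show bform M (srefl M i' α.1) (sroot j') = _
          rw [bform_srefl_left, hcf1]; ring
        have hback : α.1 = srefl M j' Δ.1 := by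
          show α.1 = srefl M j' (srefl M j' α.1)
          rw [srefl_srefl]
        have hΔ2 : 2 ≤ dep M Δ.1 := by
          have : dep M Δ.1 = dep M α.1 + 1 := hΔdep
          omega
        by_cases hst : bform M α.1 (sroot i') + bform M α.1 (sroot j') ≤ 0
        · -- C5
          have h5 := hC5 i' j' Δ α Γ hΔ2 (by rw [hΔi]; exact hst) hΔj hback h3 rfl hΓdep
          rw [h5]
          linear_combination (b * F j' Γ - a * F i' α) * hcinv
        · push_neg at hst
          have hΓjp : 0 < bform M Γ.1 (sroot j') := by rw [hΓj]; exact hst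
          have hΓs : Γ.1 ≠ sroot j' := by
            intro hh
            have hαθ : α.1 = sroot j' + sroot i' := by
              have h1 : α.1 = srefl M i' Γ.1 := by
                show α.1 = srefl M i' (srefl M i' α.1)
                rw [srefl_srefl]
              rw [h1, hh]
              exact srefl_sroot_adj hcf2
            rw [hαθ, bform_theta, cf_self, hcf1] at htm
            linarith
          have hΓ2 : 2 ≤ dep M Γ.1 := by
            apply dep_ge_two hs hΓpos
            intro m hm
            have h0' : 0 < bform M (sroot m) (sroot j') := by rw [← hm]; exact hΓjp
            apply hΓs
            show srefl M i' α.1 = sroot j'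
            rw [hm, eq_of_simple_pair_pos hs h0']
          have hv1 := hC3 i' α hα2 hsp
          have hv2 := hC3 i' Δ hΔ2 (by rw [hΔi]; exact hst)
          have hv3 := hC3 j' Γ hΓ2 hΓjp
          rw [hv1, hv2, hv3]
          have hΔd : dep M Δ.1 = dep M α.1 + 1 := hΔdep
          have he1 : dep M α.1 - 2 = (dep M Γ.1 - 2) + 1 := by omega
          have he2 : dep M Δ.1 - 2 = (dep M Γ.1 - 2) + 1 + 1 := by omega
          rw [he1, he2, pow_succ, pow_succ]
          linear_combination
            ((-(a * fr * Ring.inverse c) * (b * Ring.inverse d) ^ (dep M Γ.1 - 2)) *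
              (b * Ring.inverse d)) * ha +
            ((-(a * fr * Ring.inverse c) * (b * Ring.inverse d) ^ (dep M Γ.1 - 2)) * b) * hdinv
      -- case (s = 0, t < 0)
      have case_0m : ∀ i' j' : I, M.m i' j' = 3 → bform M α.1 (sroot i') = 0 →
          bform M α.1 (sroot j') < 0 →
          Lval M R a b c d F i' j' α = Lval M R a b c d F j' i' α := by
        intro i' j' h3 hs0 htm
        have h3' : M.m j' i' = 3 := by rw [M.symm]; exact h3
        have hcf2 : cf M j' i' = -1 := cf_three h3'
        obtain ⟨hΔpos, hΔdep⟩ := depB hs α.2 htm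
        set Δ : Pos M := ⟨srefl M j' α.1, hΔpos⟩ with hΔdf
        rw [Lval_up hs a b c d F i' j' α Δ htm rfl,
          Lval_fix a b c d F j' i' α hs0 (hsimp i')]
        have hΔi : bform M Δ.1 (sroot i') ≤ 0 := by
          show bform M (srefl M j' α.1) (sroot i') ≤ 0
          rw [bform_srefl_left, hcf2, hs0]; linarith
        have hΔj : 0 < bform M Δ.1 (sroot j') := by
          show 0 < bform M (srefl M j' α.1) (sroot j')
          rw [bform_srefl_self]; linarith
        have hback : α.1 = srefl M j' Δ.1 := by
          show α.1 = srefl M j' (srefl M j' α.1)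
          rw [srefl_srefl]
        have hΔ2 : 2 ≤ dep M Δ.1 := by
          have : dep M Δ.1 = dep M α.1 + 1 := hΔdep
          omega
        have h6 := hC6 i' j' Δ α hΔ2 hΔi hΔj hback h3 (srefl_of_bform_zero hs0)
        rw [h6]
        linear_combination (d * F j' α - a * F i' α) * hcinv
      -- case (s < 0, t < 0)
      have case_mm : ∀ i' j' : I, M.m i' j' = 3 → bform M α.1 (sroot i') < 0 →
          bform M α.1 (sroot j') < 0 →
          Lval M R a b c d F i' j' α = Lval M R a b c d F j' i' α := by
        intro i' j' h3 hsm htm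
        have h3' : M.m j' i' = 3 := by rw [M.symm]; exact h3
        have hcf1 : cf M i' j' = -1 := cf_three h3
        have hcf2 : cf M j' i' = -1 := cf_three h3'
        obtain ⟨hΔpos, hΔdep⟩ := depB hs α.2 htm
        set Δ : Pos M := ⟨srefl M j' α.1, hΔpos⟩ with hΔdf
        obtain ⟨hΓpos, hΓdep⟩ := depB hs α.2 hsm
        set Γ : Pos M := ⟨srefl M i' α.1, hΓpos⟩ with hΓdf
        rw [Lval_up hs a b c d F i' j' α Δ htm rfl,
          Lval_up hs a b c d F j' i' α Γ hsm rfl]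
        have hΔi : bform M Δ.1 (sroot i') ≤ 0 := by
          show bform M (srefl M j' α.1) (sroot i') ≤ 0
          rw [bform_srefl_left, hcf2]; linarith
        have hΔj : 0 < bform M Δ.1 (sroot j') := by
          show 0 < bform M (srefl M j' α.1) (sroot j')
          rw [bform_srefl_self]; linarith
        have hΓj : bform M Γ.1 (sroot j') ≤ 0 := by
          show bform M (srefl M i' α.1) (sroot j') ≤ 0
          rw [bform_srefl_left, hcf1]; linarith
        have hΓi : 0 < bform M Γ.1 (sroot i') := by
          show 0 < bform M (srefl M i' α.1) (sroot i')
          rw [bform_srefl_self]; linarith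
        have hbackj : α.1 = srefl M j' Δ.1 := by
          show α.1 = srefl M j' (srefl M j' α.1)
          rw [srefl_srefl]
        have hbacki : α.1 = srefl M i' Γ.1 := by
          show α.1 = srefl M i' (srefl M i' α.1)
          rw [srefl_srefl]
        have hΔ2 : 2 ≤ dep M Δ.1 := by
          have : dep M Δ.1 = dep M α.1 + 1 := hΔdep
          omega
        have hΓ2 : 2 ≤ dep M Γ.1 := by
          have : dep M Γ.1 = dep M α.1 + 1 := hΓdep
          omega
        have h7a := hC7 i' j' Δ α hΔ2 hΔi hΔj hbackj h3 (depB hs α.2 hsm).2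
        have h7b := hC7 j' i' Γ α hΓ2 hΓj hΓi hbacki h3' (depB hs α.2 htm).2
        have he1 : dep M Δ.1 - 3 = dep M α.1 - 2 := by
          have : dep M Δ.1 = dep M α.1 + 1 := hΔdep
          omega
        have he2 : dep M Γ.1 - 3 = dep M α.1 - 2 := by
          have : dep M Γ.1 = dep M α.1 + 1 := hΓdep
          omega
        rw [h7a, h7b, he1, he2]
        linear_combination (F i' α - F j' α) * ha +
          (-(d * (F i' α - F j' α))) * hcinv
      -- the coherence for the (0,0)-case
      have Zcore : ∀ i' j' k' : I, M.m i' j' = 3 →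
          bform M α.1 (sroot i') = 0 → bform M α.1 (sroot j') = 0 →
          0 < bform M α.1 (sroot k') → IsPos M (srefl M k' α.1) →
          dep M (srefl M k' α.1) + 1 = dep M α.1 →
          M.m i' k' = 2 → F i' α = F j' α := by
        intro i' j' k' h3 hs0 ht0 hkp hkpos hkdep h2ik
        have h3' : M.m j' i' = 3 := by rw [M.symm]; exact h3
        have hcf1 : cf M i' j' = -1 := cf_three h3
        have hcf2 : cf M j' i' = -1 := cf_three h3'
        have h2ki : M.m k' i' = 2 := by rw [M.symm]; exact h2ik
        have hcfik : cf M i' k' = 0 := cf_two h2ik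
        have hcfki : cf M k' i' = 0 := cf_two h2ki
        have hki' : k' ≠ i' := by rintro rfl; rw [hs0] at hkp; linarith
        have hkj' : k' ≠ j' := by rintro rfl; rw [ht0] at hkp; linarith
        set β : Pos M := ⟨srefl M k' α.1, hkpos⟩ with hβdf
        have hβd : dep M β.1 + 1 = dep M α.1 := hkdep
        have hβval : F i' α = b * Ring.inverse d * F i' β :=
          hC4 i' k' α β hα2 (le_of_eq hs0) hkp rfl h2ik
        have hβi : bform M β.1 (sroot i') = 0 := by
          show bform M (srefl M k' α.1) (sroot i') = 0
          rw [bform_srefl_left, hcfki, hs0]; ring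
        have hβk : bform M β.1 (sroot k') < 0 := by
          show bform M (srefl M k' α.1) (sroot k') < 0
          rw [bform_srefl_self]; linarith
        rcases small_ne hs (Ne.symm hkj') with h2jk | h3jk
        · -- m j' k' = 2
          have h2kj : M.m k' j' = 2 := by rw [M.symm]; exact h2jk
          have hcfkj : cf M k' j' = 0 := cf_two h2kj
          have hβj : bform M β.1 (sroot j') = 0 := by
            show bform M (srefl M k' α.1) (sroot j') = 0
            rw [bform_srefl_left, hcfkj, ht0]; ring
          have hβval2 : F j' α = b * Ring.inverse d * F j' β :=
            hC4 j' k' α β hα2 (le_of_eq ht0) hkp rfl h2jk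
          have hIHβ := IH (dep M β.1) (by omega) β rfl i' j' h3
          rw [Lval_fix a b c d F i' j' β hβj (ne_sroot_of_nonpos (le_of_eq hβj)),
            Lval_fix a b c d F j' i' β hβi (ne_sroot_of_nonpos (le_of_eq hβi))] at hIHβ
          have hββ : F i' β = F j' β := hd.mul_left_cancel hIHβ
          rw [hβval, hβval2, hββ]
        · -- m j' k' = 3
          have h3kj : M.m k' j' = 3 := by rw [M.symm]; exact h3jk
          have hcfkj : cf M k' j' = -1 := cf_three h3kj
          have hcfjk : cf M j' k' = -1 := cf_three h3jk
          have hβj : bform M β.1 (sroot j') = bform M α.1 (sroot k') := by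
            show bform M (srefl M k' α.1) (sroot j') = _
            rw [bform_srefl_left, hcfkj, ht0]; ring
          have hβjp : 0 < bform M β.1 (sroot j') := by rw [hβj]; exact hkp
          have hβnej : β.1 ≠ sroot j' := by
            intro hh
            have hαθ : α.1 = sroot j' + sroot k' := by
              have h1 : α.1 = srefl M k' β.1 := by
                show α.1 = srefl M k' (srefl M k' α.1)
                rw [srefl_srefl]
              rw [h1, hh]
              exact srefl_sroot_adj hcfjk
            rw [hαθ, bform_theta, hcf2, hcfki] at hs0
            linarith
          obtain ⟨hγpos, hγdep⟩ := depA' hs hkpos hβjp hβnej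
          set γ : Pos M := ⟨srefl M j' β.1, hγpos⟩ with hγdf
          have hγd : dep M γ.1 + 1 = dep M β.1 := hγdep
          have hγi : bform M γ.1 (sroot i') = bform M α.1 (sroot k') := by
            show bform M (srefl M j' β.1) (sroot i') = _
            rw [bform_srefl_left, hcf2, hβi, hβj]; ring
          have hγj : bform M γ.1 (sroot j') = -(bform M α.1 (sroot k')) := by
            show bform M (srefl M j' β.1) (sroot j') = _
            rw [bform_srefl_self, hβj]
          have hγk : bform M γ.1 (sroot k') = 0 := by
            show bform M (srefl M j' β.1) (sroot k') = 0
            rw [bform_srefl_left, hcfjk]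
            show bform M β.1 (sroot k') - bform M β.1 (sroot j') * (-1) = 0
            have hβk' : bform M β.1 (sroot k') = -(bform M α.1 (sroot k')) := by
              show bform M (srefl M k' α.1) (sroot k') = _
              rw [bform_srefl_self]
            rw [hβk', hβj]; ring
          have hγip : 0 < bform M γ.1 (sroot i') := by rw [hγi]; exact hkp
          have hγnei : γ.1 ≠ sroot i' := by
            intro hh
            have e1 : bform M γ.1 (sroot i') = 2 := by rw [hh, bform_sroot_self]
            have e2 : bform M γ.1 (sroot j') = -1 := by
              rw [hh, bform_sroot_sroot, hcf1]
            rw [hγi] at e1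
            rw [hγj] at e2
            linarith
          obtain ⟨hδpos, hδdep⟩ := depA' hs hγpos hγip hγnei
          set δ : Pos M := ⟨srefl M i' γ.1, hδpos⟩ with hδdf
          have hδd : dep M δ.1 + 1 = dep M γ.1 := hδdep
          have hδj : bform M δ.1 (sroot j') = 0 := by
            show bform M (srefl M i' γ.1) (sroot j') = 0
            rw [bform_srefl_left, hcf1, hγj, hγi]; ring
          have hδk : bform M δ.1 (sroot k') = 0 := by
            show bform M (srefl M i' γ.1) (sroot k') = 0
            rw [bform_srefl_left, hcfik, hγk]; ring
          have hγ2 : 2 ≤ dep M γ.1 := by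
            apply dep_ge_two hs hγpos
            intro m hm
            have h0' : 0 < bform M (sroot m) (sroot i') := by rw [← hm]; exact hγip
            apply hγnei
            show srefl M j' β.1 = sroot i'
            rw [hm, eq_of_simple_pair_pos hs h0']
          -- the six equations
          have z1 : F j' α = Ring.inverse c * (b * F k' γ - a * F j' β) :=
            hC5 j' k' α β γ hα2 (le_of_eq ht0) hkp rfl h3jk rfl hγdep
          have z3 : F k' γ = b * Ring.inverse d * F k' δ :=
            hC4 k' i' γ δ hγ2 (le_of_eq hγk) hγip rfl h2ki
          have hIHβ := IH (dep M β.1) (by omega) β rfl i' j' h3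
          rw [Lval_down hs a b c d F i' j' β γ hβjp hβnej rfl,
            Lval_fix a b c d F j' i' β hβi (ne_sroot_of_nonpos (le_of_eq hβi))] at hIHβ
          -- hIHβ : b * F i' γ = d * F j' β
          have hIHδ := IH (dep M δ.1) (by omega) δ rfl j' k' h3jk
          rw [Lval_fix a b c d F j' k' δ hδk (ne_sroot_of_nonpos (le_of_eq hδk)),
            Lval_fix a b c d F k' j' δ hδj (ne_sroot_of_nonpos (le_of_eq hδj))] at hIHδ
          have e4 : F j' δ = F k' δ := hd.mul_left_cancel hIHδ
          have hIHγ := IH (dep M γ.1) (by omega) γ rfl i' j' h3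
          have hγjm : bform M γ.1 (sroot j') < 0 := by rw [hγj]; linarith
          have hβback : β.1 = srefl M j' γ.1 := by
            show β.1 = srefl M j' (srefl M j' β.1)
            rw [srefl_srefl]
          rw [Lval_up hs a b c d F i' j' γ β hγjm hβback,
            Lval_down hs a b c d F j' i' γ δ hγip hγnei rfl] at hIHγ
          -- hIHγ : a * F i' γ + c * F i' β = b * F j' δ
          have e2' : F j' β = Ring.inverse d * (b * F i' γ) := by
            apply hd.mul_left_cancel
            linear_combination -hIHβ + (-(b * F i' γ)) * hdinv
          have e5' : F i' β = Ring.inverse c * (b * F j' δ - a * F i' γ) := by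
            apply hc.mul_left_cancel
            linear_combination hIHγ + (-(b * F j' δ - a * F i' γ)) * hcinv
          rw [hβval, e5', e4, z1, z3, e2']
          ring
      -- dispatch of the case `(s = 0, t = 0)`
      have case_00 : bform M α.1 (sroot i) = 0 → bform M α.1 (sroot j) = 0 →
          Lval M R a b c d F i j α = Lval M R a b c d F j i α := by
        intro hs0 ht0
        obtain ⟨k, hkp, hkpos, hkdep⟩ := reducer hs α.2 hα2
        rw [hdep] at hkdep
        have hki : k ≠ i := by rintro rfl; rw [hs0] at hkp; linarith
        have hkj : k ≠ j := by rintro rfl; rw [ht0] at hkp; linarith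
        have htri : ¬(M.m i k = 3 ∧ M.m j k = 3) := by
          rintro ⟨h3ik, h3jk⟩
          have hsum : bform M α.1 (sroot i) + bform M α.1 (sroot j) +
              bform M α.1 (sroot k)
              = ∑ m, α.1 m * (cf M m i + (cf M m j + cf M m k)) := by
            rw [bform_sroot_right, bform_sroot_right, bform_sroot_right,
              ← Finset.sum_add_distrib, ← Finset.sum_add_distrib]
            apply Finset.sum_congr rfl
            intro m _
            ring
          have hbound : ∀ m, α.1 m * (cf M m i + (cf M m j + cf M m k)) ≤ 0 := by
            intro m
            have hnn := α.2.2 m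
            have hcfs : cf M m i + (cf M m j + cf M m k) ≤ 0 := by
              by_cases h1 : m = i
              · subst h1
                rw [cf_self, cf_three hm3, cf_three h3ik]
                norm_num
              by_cases h2 : m = j
              · subst h2
                rw [cf_three hm3', cf_self, cf_three h3jk]
                norm_num
              by_cases h3 : m = k
              · subst h3
                rw [cf_three (by rw [M.symm]; exact h3ik),
                  cf_three (by rw [M.symm]; exact h3jk), cf_self]
                norm_num
              · have q1 := cf_nonpos hs h1
                have q2 := cf_nonpos hs h2
                have q3 := cf_nonpos hs h3
                linarith
            have := mul_le_mul_of_nonneg_left hcfs hnn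
            simpa using this
          have hle : ∑ m, α.1 m * (cf M m i + (cf M m j + cf M m k)) ≤ 0 :=
            Finset.sum_nonpos (fun m _ => hbound m)
          rw [← hsum, hs0, ht0] at hle
          linarith
        rw [Lval_fix a b c d F i j α ht0 (hsimp j),
          Lval_fix a b c d F j i α hs0 (hsimp i)]
        rcases small_ne hs (Ne.symm hki) with h2 | h3ik
        · rw [Zcore i j k hm3 hs0 ht0 hkp hkpos (by rw [hdep]; exact hkdep) h2]
        · rcases small_ne hs (Ne.symm hkj) with h2 | h3jk
          · rw [Zcore j i k hm3' ht0 hs0 hkp hkpos (by rw [hdep]; exact hkdep) h2]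
          · exact absurd ⟨h3ik, h3jk⟩ htri
      -- final dispatch
      rcases lt_trichotomy (bform M α.1 (sroot i)) 0 with hsx | hsx | hsx
      · rcases lt_trichotomy (bform M α.1 (sroot j)) 0 with htx | htx | htx
        · exact case_mm i j hm3 hsx htx
        · exact (case_0m j i hm3' htx hsx).symm
        · exact (case_pm j i hm3' htx hsx).symm
      · rcases lt_trichotomy (bform M α.1 (sroot j)) 0 with htx | htx | htx
        · exact case_0m i j hm3 hsx htx
        · exact case_00 hsx htx
        · exact (case_p0 j i hm3' htx hsx).symm
      · rcases lt_trichotomy (bform M α.1 (sroot j)) 0 with htx | htx | htx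
        · exact case_pm i j hm3 hsx htx
        · exact case_p0 i j hm3 hsx htx
        · exact case_pp i j hm3 hsx htx

end Master
end LKProof
open LK in
/-- the inductive construction of Paris yields an LK-family. -/
theorem statement_12 {I : Type} [Fintype I] [DecidableEq I] (M : CoxM I) (hsmall : M.Small)
    (R : Type) [CommRing R] (b c d : R) (hb : IsUnit b) (hc : IsUnit c) (hd : IsUnit d)
    (a : R) (ha : a = d - b * c * Ring.inverse d)
    (fr : R) (F : I → Pos M → R)
    (hC1 : ∀ i : I, F i (simplePos M i) = fr)
    (hC2 : ∀ i j : I, i ≠ j → F i (simplePos M j) = 0)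
    (hC3 : ∀ (i : I) (aa : Pos M), 2 ≤ dep M aa.1 → 0 < bform M aa.1 (sroot i) →
      F i aa = -(a * fr * Ring.inverse c) * (b * Ring.inverse d) ^ (dep M aa.1 - 2))
    (hC4 : ∀ (i j : I) (aa bb : Pos M), 2 ≤ dep M aa.1 → bform M aa.1 (sroot i) ≤ 0 →
      0 < bform M aa.1 (sroot j) → bb.1 = srefl M j aa.1 → M.m i j = 2 →
      F i aa = b * Ring.inverse d * F i bb)
    (hC5 : ∀ (i j : I) (aa bb gg : Pos M), 2 ≤ dep M aa.1 → bform M aa.1 (sroot i) ≤ 0 →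
      0 < bform M aa.1 (sroot j) → bb.1 = srefl M j aa.1 → M.m i j = 3 →
      gg.1 = srefl M i bb.1 → dep M gg.1 + 1 = dep M bb.1 →
      F i aa = Ring.inverse c * (b * F j gg - a * F i bb))
    (hC6 : ∀ (i j : I) (aa bb : Pos M), 2 ≤ dep M aa.1 → bform M aa.1 (sroot i) ≤ 0 →
      0 < bform M aa.1 (sroot j) → bb.1 = srefl M j aa.1 → M.m i j = 3 →
      srefl M i bb.1 = bb.1 →
      F i aa = Ring.inverse c * (d * F j bb - a * F i bb))
    (hC7 : ∀ (i j : I) (aa bb : Pos M), 2 ≤ dep M aa.1 → bform M aa.1 (sroot i) ≤ 0 →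
      0 < bform M aa.1 (sroot j) → bb.1 = srefl M j aa.1 → M.m i j = 3 →
      dep M (srefl M i bb.1) = dep M bb.1 + 1 →
      F i aa = b * Ring.inverse d * F i bb + d * Ring.inverse c * F j bb
        + a * d * fr * Ring.inverse (c * c) * (b * Ring.inverse d) ^ (dep M aa.1 - 3)) :
    IsLK M R a b c d (fun i => (Finsupp.lift R R (Pos M)) (F i)) := by
  have hsingle : ∀ (α : Pos M) (r : R), (Finsupp.single α r : VV M R) = r • ev M R α := by
    intro α r
    rw [ev, Finsupp.smul_single, smul_eq_mul, mul_one]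
  refine ⟨?_, ?_, ?_⟩
  · intro i j hij
    show (Finsupp.lift R R (Pos M) (F i)) (ev M R (simplePos M j)) = 0
    rw [LKProof.lift_ev, hC2 i j hij]
  · intro i j hm2
    apply Finsupp.lhom_ext
    intro α r
    have h2 := LKProof.masterR2 hsmall hb hc hd a ha fr F hC1 hC2 hC3 hC4 i j hm2 α
    rw [LinearMap.comp_apply, LinearMap.smul_apply]
    rw [hsingle α r, map_smul, map_smul, map_smul]
    rw [show (Finsupp.lift R R (Pos M) (F i)) (phi M R a b c d j (ev M R α)) =
        LKProof.Lval M R a b c d F i j α from rfl, h2, LKProof.lift_ev]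
    rw [smul_eq_mul, smul_eq_mul, smul_eq_mul]
    ring
  · intro i j hm3
    apply Finsupp.lhom_ext
    intro α r
    have h3 := LKProof.masterR3 hsmall hb hc hd a ha fr F hC1 hC2 hC3 hC4 hC5 hC6 hC7
      (dep M α.1) α rfl i j hm3
    rw [LinearMap.comp_apply, LinearMap.comp_apply]
    rw [hsingle α r, map_smul, map_smul, map_smul, map_smul]
    rw [show (Finsupp.lift R R (Pos M) (F i)) (phi M R a b c d j (ev M R α)) =
        LKProof.Lval M R a b c d F i j α from rfl, h3]
    rfl
end
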